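/- arXiv:1205.1358 — 6 statements merged into one kernel-verified Lean document; each statement's English description precedes it below -/
import Mathlib

section
/- If an FO sentence φ is preserved under substructures modulo a finite core, then there exists a natural number B (depending only on φ) such that every model of φ has a core of size at most B; that is, PSC_f = ⋃_{B≥0} PSC(B). -/
open FirstOrder Language FirstOrder.Language FirstOrder.Language.Structure

universe u v

namespace Stmt

variable {L : FirstOrder.Language.{u, v}}

/-- Universally quantify the last `k` bound variables of a bounded formula. -/
def allsK {n : ℕ} : (k : ℕ) → L.BoundedFormula Empty (n + k) → L.BoundedFormula Empty n
  | 0, φ => φ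
  | k + 1, φ => allsK k φ.all

/-- Existentially quantify the last `k` bound variables of a bounded formula. -/
def exsK {n : ℕ} : (k : ℕ) → L.BoundedFormula Empty (n + k) → L.BoundedFormula Empty n
  | 0, φ => φ
  | k + 1, φ => exsK k φ.ex

/-- The Σ⁰₂ sentence `∃x₁…x_B ∀y₁…y_n β` (for `β` quantifier-free). -/
def sigma2 (B n : ℕ) (β : L.BoundedFormula Empty (B + n)) : L.Sentence :=
  (allsK n β).exs

/-- The Π⁰₂ sentence `∀x₁…x_k ∃y₁…y_m β` (for `β` quantifier-free). -/
def pi2 (k m : ℕ) (β : L.BoundedFormula Empty (k + m)) : L.Sentence :=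
  (exsK m β).alls

/-- `C` is a core of the structure `M` w.r.t. `φ`: every (nonempty) substructure of `M`
whose universe contains `C` satisfies `φ`. -/
def IsCore (φ : L.Sentence) (M : Type max u v) [L.Structure M] (C : Set M) : Prop :=
  ∀ N : L.Substructure M, C ⊆ (N : Set M) → Nonempty N → ↥N ⊨ φ

/-- `φ` is preserved under substructures modulo a finite core: every model of `φ`
has a finite core w.r.t. `φ`. -/
def PSCf (φ : L.Sentence) : Prop :=
  ∀ (M : Type max u v) [L.Structure M] [Nonempty M],
    M ⊨ φ → ∃ C : Set M, C.Finite ∧ IsCore φ M C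

/-- `φ ∈ PSC(B)`: every model of `φ` has a core of size at most `B` w.r.t. `φ`. -/
def PSC (φ : L.Sentence) (B : ℕ) : Prop :=
  ∀ (M : Type max u v) [L.Structure M] [Nonempty M],
    M ⊨ φ → ∃ C : Finset M, C.card ≤ B ∧ IsCore φ M ↑C

/-- Logical equivalence of sentences: they hold in exactly the same (nonempty) structures. -/
def Equiv (φ ψ : L.Sentence) : Prop :=
  ∀ (M : Type max u v) [L.Structure M] [Nonempty M], M ⊨ φ ↔ M ⊨ ψ


/-- A language with one relation symbol of each arity and no function symbols. -/
def QLang : FirstOrder.Language.{u, v} := ⟨fun _ => PEmpty, fun _ => PUnit⟩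

variable (L) in
/-- The guard relation symbol of arity `k`. -/
def Qrel (k : ℕ) : (L.sum QLang.{u, v}).Relations k := Sum.inr PUnit.unit

/-- The atomic guard formula `Q(y₀,…,yₙ,x)`. -/
def guard {n m : ℕ} (x : (L.sum QLang.{u, v}).Term (Fin (n + 1) ⊕ Fin m)) :
    (L.sum QLang.{u, v}).BoundedFormula (Fin (n + 1)) m :=
  Relations.boundedFormula (Qrel L (n + 2)) (Fin.snoc (fun i => Term.var (Sum.inl i)) x)

/-- Map terms of `L` over `Empty` into the extended language with parameter variables. -/
def tmap {n m : ℕ} (t : L.Term (Empty ⊕ Fin m)) : (L.sum QLang.{u, v}).Term (Fin (n + 1) ⊕ Fin m) :=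
  (LHom.sumInl.onTerm t).relabel (Sum.map (fun e => e.elim) id)

/-- Relativization of an `L`-bounded-formula to the guard `Q(ȳ,·)`. -/
def relv {n : ℕ} : ∀ {m : ℕ}, L.BoundedFormula Empty m →
    (L.sum QLang.{u, v}).BoundedFormula (Fin (n + 1)) m
  | _, BoundedFormula.falsum => BoundedFormula.falsum
  | _, BoundedFormula.equal t₁ t₂ => BoundedFormula.equal (tmap t₁) (tmap t₂)
  | _, BoundedFormula.rel R ts => BoundedFormula.rel (Sum.inl R) fun i => tmap (ts i)
  | _, BoundedFormula.imp f g => (relv f).imp (relv g)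
  | m, BoundedFormula.all f =>
      ((guard (Term.var (Sum.inr (Fin.last m)))).imp (relv f)).all

section Realize

variable {M : Type*} [L.Structure M] [(L.sum QLang.{u, v}).Structure M]
  [(LHom.sumInl : L →ᴸ L.sum QLang.{u, v}).IsExpansionOn M]

theorem realize_tmap {n m : ℕ} (t : L.Term (Empty ⊕ Fin m)) (v : Fin (n + 1) → M)
    (xs : Fin m → M) :
    (tmap (n := n) t).realize (Sum.elim v xs) = t.realize (Sum.elim Empty.elim xs) := by
  rw [tmap, Term.realize_relabel, LHom.realize_onTerm]
  congr 1
  funext a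
  rcases a with a | a
  · exact a.elim
  · rfl

theorem realize_guard {n m : ℕ} (x : (L.sum QLang.{u, v}).Term (Fin (n + 1) ⊕ Fin m))
    (v : Fin (n + 1) → M) (xs : Fin m → M) :
    (guard x).Realize v xs ↔
      RelMap (Qrel L (n + 2)) (Fin.snoc v (x.realize (Sum.elim v xs))) := by
  rw [guard, BoundedFormula.realize_rel]
  have : (fun i => Term.realize (Sum.elim v xs)
      ((Fin.snoc (fun j => Term.var (Sum.inl j)) x :
        Fin (n + 2) → (L.sum QLang.{u, v}).Term (Fin (n + 1) ⊕ Fin m)) i)) =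
      Fin.snoc v (x.realize (Sum.elim v xs)) := by
    funext i
    refine Fin.lastCases ?_ ?_ i
    · simp [Fin.snoc_last]
    · intro j; simp [Fin.snoc_castSucc, Term.realize]
  rw [this]

theorem realize_relv {n : ℕ} (v : Fin (n + 1) → M) (S : L.Substructure M)
    (hS : ∀ x : M, x ∈ S ↔ RelMap (Qrel L (n + 2)) (Fin.snoc v x)) :
    ∀ {m : ℕ} (f : L.BoundedFormula Empty m) (xs : Fin m → S),
      (relv (n := n) f).Realize v (fun i => (xs i : M)) ↔ f.Realize Empty.elim xs := by
  intro m f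
  induction f with
  | falsum => intro xs; exact Iff.rfl
  | equal t₁ t₂ =>
      intro xs
      have key : ∀ t : L.Term (Empty ⊕ _),
          Term.realize (Sum.elim Empty.elim fun i => ((xs i : M))) t
            = ((Term.realize (Sum.elim Empty.elim xs) t : S) : M) := by
        intro t
        have h1 := HomClass.realize_term (L := L) S.subtype (t := t)
          (v := Sum.elim Empty.elim xs)
        have h2 : Term.realize (Sum.elim Empty.elim fun i => ((xs i : M))) t
            = Term.realize (⇑S.subtype ∘ Sum.elim Empty.elim xs) t := by
          congr 1
          funext a
          rcases a with a | a
          · exact a.elim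
          · rfl
        rw [h2]
        exact h1
      show (tmap t₁).realize (Sum.elim v fun i => ((xs i : M)))
          = (tmap t₂).realize (Sum.elim v fun i => ((xs i : M))) ↔ _
      rw [realize_tmap, realize_tmap, key, key]
      exact ⟨fun h => Subtype.coe_injective h, fun h => congrArg _ h⟩
  | rel R ts =>
      intro xs
      have key : ∀ t : L.Term (Empty ⊕ _),
          Term.realize (Sum.elim Empty.elim fun i => ((xs i : M))) t
            = ((Term.realize (Sum.elim Empty.elim xs) t : S) : M) := by
        intro t
        have h1 := HomClass.realize_term (L := L) S.subtype (t := t)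
          (v := Sum.elim Empty.elim xs)
        have h2 : Term.realize (Sum.elim Empty.elim fun i => ((xs i : M))) t
            = Term.realize (⇑S.subtype ∘ Sum.elim Empty.elim xs) t := by
          congr 1
          funext a
          rcases a with a | a
          · exact a.elim
          · rfl
        rw [h2]
        exact h1
      rw [show relv (BoundedFormula.rel R ts) =
            Relations.boundedFormula (Sum.inl R : (L.sum QLang.{u, v}).Relations _)
              (fun i => tmap (n := n) (ts i)) from rfl,
          show BoundedFormula.rel R ts = Relations.boundedFormula R ts from rfl,
          BoundedFormula.realize_rel]
      show RelMap (L := L.sum QLang.{u, v}) (Sum.inl R)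
          (fun i => (tmap (n := n) (ts i)).realize (Sum.elim v fun j => ((xs j : M)))) ↔ _
      have h2 : (fun i => (tmap (n := n) (ts i)).realize (Sum.elim v fun j => ((xs j : M))))
          = fun i => ((Term.realize (Sum.elim Empty.elim xs) (ts i) : S) : M) := by
        funext i; rw [realize_tmap, key]
      rw [h2]
      have h3 := (LHom.sumInl : L →ᴸ L.sum QLang.{u, v}).map_onRelation
        (M := M) R (fun i => ((Term.realize (Sum.elim Empty.elim xs) (ts i) : S) : M))
      exact iff_of_eq h3
  | imp f g ihf ihg =>
      intro xs
      show (((relv (n := n) f).imp (relv g)).Realize v fun i => ((xs i : M))) ↔ _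
      rw [BoundedFormula.realize_imp]
      exact imp_congr (ihf xs) (ihg xs)
  | all f ih =>
      intro xs
      rw [show relv (BoundedFormula.all f) =
            ((guard (L := L) (Term.var (Sum.inr (Fin.last _)))).imp (relv f)).all from rfl,
          BoundedFormula.realize_all, BoundedFormula.realize_all]
      constructor
      · intro H a
        have h1 := H (a : M)
        rw [BoundedFormula.realize_imp, realize_guard] at h1
        have hval : (Term.var (Sum.inr (Fin.last _)) :
            (L.sum QLang.{u, v}).Term (Fin (n+1) ⊕ _)).realize
            (Sum.elim v (Fin.snoc (fun i => ((xs i : M))) (a : M))) = (a : M) := by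
          simp [Term.realize, Fin.snoc_last]
        rw [hval] at h1
        have h2 := h1 ((hS (a : M)).1 a.2)
        have h3 : (Fin.snoc (fun i => ((xs i : M))) (a : M)) =
            (fun b : S => (b : M)) ∘ Fin.snoc xs a :=
          (Fin.comp_snoc (fun b : S => (b : M)) xs a).symm
        rw [h3] at h2
        exact (ih (Fin.snoc xs a)).1 h2
      · intro H a
        rw [BoundedFormula.realize_imp, realize_guard]
        intro hg
        have hval : (Term.var (Sum.inr (Fin.last _)) :
            (L.sum QLang.{u, v}).Term (Fin (n+1) ⊕ _)).realize
            (Sum.elim v (Fin.snoc (fun i => ((xs i : M))) a)) = a := by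
          simp [Term.realize, Fin.snoc_last]
        rw [hval] at hg
        have ha : a ∈ S := (hS a).2 hg
        have h2 := H (⟨a, ha⟩ : S)
        have h3 : (Fin.snoc (fun i => ((xs i : M))) a) =
            (fun b : S => (b : M)) ∘ Fin.snoc xs (⟨a, ha⟩ : S) :=
          (Fin.comp_snoc (fun b : S => (b : M)) xs (⟨a, ha⟩ : S)).symm
        rw [h3]
        exact (ih (Fin.snoc xs (⟨a, ha⟩ : S))).2 h2

theorem realize_relv_sentence {n : ℕ} (v : Fin (n + 1) → M) (S : L.Substructure M)
    (hS : ∀ x : M, x ∈ S ↔ RelMap (Qrel L (n + 2)) (Fin.snoc v x))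
    (φ : L.Sentence) (xs : Fin 0 → M) :
    (relv (n := n) φ).Realize v xs ↔ S ⊨ φ := by
  have h := realize_relv v S hS φ (default : Fin 0 → S)
  have hxs : (fun i => (((default : Fin 0 → S) i : S) : M)) = xs :=
    funext fun i => i.elim0
  rw [hxs] at h
  rw [h]
  show BoundedFormula.Realize φ Empty.elim (default : Fin 0 → S) ↔
    BoundedFormula.Realize φ (default : Empty → S) (default : Fin 0 → S)
  rw [show (Empty.elim : Empty → S) = (default : Empty → S) from funext fun e => e.elim]

end Realize

section Theory

/-- Universal quantification over the variables sent to the right by `f`. -/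
noncomputable def oIAlls {L' : FirstOrder.Language} {α β γ : Type*} [Finite γ]
    (f : α → β ⊕ γ) (φ : L'.Formula α) : L'.Formula β :=
  Formula.iAlls γ (φ.relabel f)

theorem realize_oIAlls {L' : FirstOrder.Language} {α β γ : Type*} [Finite γ]
    {M : Type*} [L'.Structure M] {f : α → β ⊕ γ} {φ : L'.Formula α} {v : β → M} :
    (oIAlls f φ).Realize v ↔ ∀ i : γ → M, φ.Realize (fun a => Sum.elim v i (f a)) := by
  rw [oIAlls, Formula.realize_iAlls]
  simp only [Formula.realize_relabel]
  rfl

variable (L) in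
/-- `∀ȳ, Q(ȳ, yᵢ)`. -/
noncomputable def axA (n : ℕ) (i : Fin (n + 1)) : (L.sum QLang.{u, v}).Sentence :=
  oIAlls (Sum.inr : Fin (n + 1) → Empty ⊕ Fin (n + 1))
    (guard (Term.var (Sum.inl i)))

variable (L) in
/-- `∀ȳ x̄, (⋀ⱼ Q(ȳ, xⱼ)) → Q(ȳ, f(x̄))`. -/
noncomputable def axB (n : ℕ) {k : ℕ} (f : L.Functions k) : (L.sum QLang.{u, v}).Sentence :=
  oIAlls (Sum.inr : Fin (n + 1) → Empty ⊕ Fin (n + 1))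
    (BoundedFormula.alls
      (((List.ofFn fun j : Fin k => guard (L := L) (n := n) (m := k)
          (Term.var (Sum.inr j))).foldr (· ⊓ ·) ⊤).imp
        (guard (Term.func (Sum.inl f) fun j => Term.var (Sum.inr j)))))

/-- `∀ȳ, ¬ φ^{Q(ȳ,·)}`. -/
noncomputable def axC (φ : L.Sentence) (n : ℕ) : (L.sum QLang.{u, v}).Sentence :=
  oIAlls (Sum.inr : Fin (n + 1) → Empty ⊕ Fin (n + 1))
    (BoundedFormula.not (relv (n := n) φ))

/-- The axioms at tuple length `n + 1`. -/
noncomputable def Ax (φ : L.Sentence) (n : ℕ) : Set ((L.sum QLang.{u, v}).Sentence) :=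
  (Set.range (axA L n) ∪ ⋃ k : ℕ, Set.range fun f : L.Functions k => axB L n f)
    ∪ {axC φ n}

/-- The full theory. -/
noncomputable def Th (φ : L.Sentence) : Set ((L.sum QLang.{u, v}).Sentence) :=
  insert (LHom.sumInl.onSentence φ) (⋃ n : ℕ, Ax φ n)

theorem th_satisfiable (φ : L.Sentence)
    (hM : ∀ B : ℕ, ∃ (N : Type max u v) (_ : L.Structure N) (_ : Nonempty N),
      N ⊨ φ ∧ ∀ C : Finset N, C.card ≤ B → ¬ IsCore φ N ↑C) :
    Theory.IsSatisfiable (Th (L := L) φ) := by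
  rw [Theory.isSatisfiable_iff_isFinitelySatisfiable]
  intro T0 hT0
  classical
  set g : (L.sum QLang.{u, v}).Sentence → ℕ := fun ψ =>
    if h : ∃ n, ψ ∈ Ax (L := L) φ n then h.choose else 0 with hgdef
  set B := T0.sup g with hB
  obtain ⟨N, instN, instNe, hNφ, hNnc⟩ := hM (B + 1)
  have key : ∀ C : Finset N, C.card ≤ B + 1 →
      ∃ S : L.Substructure N, ↑C ⊆ (S : Set N) ∧ Nonempty S ∧ ¬((S : Type max u v) ⊨ φ) := by
    intro C hC
    have hnc := hNnc C hC
    unfold IsCore at hnc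
    push_neg at hnc
    exact hnc
  let bad : ∀ m : ℕ, (Fin m → N) → L.Substructure N := fun m ys =>
    if h : (Finset.image ys Finset.univ).card ≤ B + 1 then (key _ h).choose else ⊤
  have bad_mem : ∀ (m : ℕ) (ys : Fin m → N) (i : Fin m), ys i ∈ bad m ys := by
    intro m ys i
    by_cases h : (Finset.image ys Finset.univ).card ≤ B + 1
    · have heq : bad m ys = (key _ h).choose := dif_pos h
      rw [heq]
      exact (key _ h).choose_spec.1 (by simp)
    · have heq : bad m ys = ⊤ := dif_neg h
      rw [heq]
      exact Substructure.mem_top _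
  have bad_not : ∀ (m : ℕ) (ys : Fin m → N),
      (Finset.image ys Finset.univ).card ≤ B + 1 → ¬(((bad m ys) : Type max u v) ⊨ φ) := by
    intro m ys h
    have heq : bad m ys = (key _ h).choose := dif_pos h
    rw [heq]
    exact (key _ h).choose_spec.2.2
  letI instQ : QLang.{u, v}.Structure N :=
    { funMap := fun {k} f _ => f.elim
      RelMap := fun {k} _ x =>
        match k, x with
        | 0, _ => True
        | (m + 1), x => x (Fin.last m) ∈ bad m fun j => x j.castSucc }
  have relmapQ : ∀ (m : ℕ) (ys : Fin m → N) (a : N),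
      RelMap (L := L.sum QLang.{u, v}) (Qrel L (m + 1)) (Fin.snoc ys a) ↔ a ∈ bad m ys := by
    intro m ys a
    show ((Fin.snoc ys a : Fin (m + 1) → N) (Fin.last m) ∈
        bad m fun j => (Fin.snoc ys a : Fin (m + 1) → N) j.castSucc) ↔ _
    have h1 : (fun j : Fin m => (Fin.snoc ys a : Fin (m + 1) → N) j.castSucc) = ys := by
      funext j; simp
    rw [Fin.snoc_last, h1]
  have hA : ∀ (n : ℕ) (i : Fin (n + 1)), N ⊨ axA L n i := by
    intro n i
    unfold axA
    refine realize_oIAlls.mpr ?_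
    intro ys
    refine (realize_guard (L := L) (M := N) _ _ (default : Fin 0 → N)).mpr ?_
    exact (relmapQ (n + 1) ys (ys i)).mpr (bad_mem (n + 1) ys i)
  have hBx : ∀ (n k : ℕ) (f : L.Functions k), N ⊨ axB L n f := by
    intro n k f
    unfold axB
    refine realize_oIAlls.mpr ?_
    intro ys
    refine BoundedFormula.realize_alls.mpr ?_
    intro zs
    rw [BoundedFormula.realize_imp, BoundedFormula.realize_foldr_inf]
    intro hyp
    refine (realize_guard (L := L) (M := N) _ _ zs).mpr ?_
    have hz : ∀ j : Fin k, zs j ∈ bad (n + 1) ys := by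
      intro j
      have hin : (guard (L := L) (n := n) (m := k) (Term.var (Sum.inr j))) ∈
          List.ofFn fun j' : Fin k =>
            guard (L := L) (n := n) (m := k) (Term.var (Sum.inr j')) := by
        rw [List.mem_ofFn]
        exact ⟨j, rfl⟩
      have hj := hyp _ hin
      rw [realize_guard (L := L) (M := N)] at hj
      exact (relmapQ (n + 1) ys (zs j)).mp hj
    exact (relmapQ (n + 1) ys _).mpr ((bad (n + 1) ys).fun_mem f zs hz)
  have hC : ∀ n : ℕ, n ≤ B → N ⊨ axC φ n := by
    intro n hn
    unfold axC
    refine realize_oIAlls.mpr ?_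
    intro ys
    refine BoundedFormula.realize_not.mpr ?_
    intro hcon
    have hcard : (Finset.image ys Finset.univ).card ≤ B + 1 :=
      le_trans (le_trans Finset.card_image_le (by simp)) (Nat.succ_le_succ hn)
    refine bad_not (n + 1) ys hcard ?_
    exact (realize_relv_sentence (L := L) (M := N) ys (bad (n + 1) ys)
      (fun x => (relmapQ (n + 1) ys x).symm) φ (default : Fin 0 → N)).mp hcon
  have hreal : ∀ ψ ∈ (T0 : (L.sum QLang.{u, v}).Theory), N ⊨ ψ := by
    intro ψ hψ
    have hmem : ψ ∈ Th (L := L) φ := hT0 hψ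
    rcases Set.mem_insert_iff.mp hmem with rfl | hun
    · exact (LHom.realize_onSentence (M := N)
        (LHom.sumInl : L →ᴸ L.sum QLang.{u, v}) φ).mpr hNφ
    · have hex : ∃ n, ψ ∈ Ax (L := L) φ n := by
        rw [Set.mem_iUnion] at hun
        exact hun
      have hgmem : ψ ∈ Ax (L := L) φ (g ψ) := by
        rw [hgdef]
        simp only [dif_pos hex]
        exact hex.choose_spec
      have hgB : g ψ ≤ B := Finset.le_sup hψ
      simp only [Ax, Set.mem_union, Set.mem_range, Set.mem_iUnion,
        Set.mem_singleton_iff] at hgmem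
      rcases hgmem with (⟨i, heq⟩ | ⟨k, f, heq⟩) | heq
      · rw [← heq]; exact hA _ i
      · rw [← heq]; exact hBx _ k f
      · rw [heq]; exact hC _ hgB
  haveI : Theory.Model N (T0 : (L.sum QLang.{u, v}).Theory) := ⟨hreal⟩
  exact Theory.Model.isSatisfiable N

end Theory

/-- If an FO sentence `φ` is preserved under substructures modulo a finite core, then there is
a natural number `B` (depending only on `φ`) such that every model of `φ` has a core of size
at most `B`; that is, `PSC_f = ⋃_{B ≥ 0} PSC(B)`. -/
theorem statement1 [Finite L.Symbols] (φ : L.Sentence) (h : PSCf φ) :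
    ∃ B : ℕ, PSC φ B := by
  by_contra hcon
  push_neg at hcon
  have hM : ∀ B : ℕ, ∃ (N : Type max u v) (_ : L.Structure N) (_ : Nonempty N),
      N ⊨ φ ∧ ∀ C : Finset N, C.card ≤ B → ¬ IsCore φ N ↑C := by
    intro B
    by_contra h'
    refine hcon B ?_
    intro M instM instNe hMφ
    by_contra h''
    push_neg at h''
    exact h' ⟨M, instM, instNe, hMφ, h''⟩
  obtain ⟨Mod⟩ := th_satisfiable (L := L) φ hM
  classical
  letI instL' : L.Structure Mod := (LHom.sumInl : L →ᴸ L.sum QLang.{u, v}).reduct Mod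
  haveI instExp : (LHom.sumInl : L →ᴸ L.sum QLang.{u, v}).IsExpansionOn Mod :=
    ⟨fun _ _ => rfl, fun _ _ => rfl⟩
  have hTh : ∀ ψ ∈ Th (L := L) φ, (Mod : Type max u v) ⊨ ψ := fun ψ hψ =>
    Theory.realize_sentence_of_mem (Th (L := L) φ) hψ
  have hφM : (Mod : Type max u v) ⊨ φ :=
    (LHom.realize_onSentence (M := (Mod : Type max u v))
      (LHom.sumInl : L →ᴸ L.sum QLang.{u, v}) φ).mp
      (hTh _ (Set.mem_insert _ _))
  obtain ⟨C, hCfin, hCcore⟩ := h Mod hφM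
  obtain ⟨m0⟩ := (inferInstance : Nonempty Mod)
  let l : List Mod := hCfin.toFinset.toList
  set n : ℕ := l.length with hn
  let ys : Fin (n + 1) → Mod := fun i => l.getD i m0
  have hcov : ∀ c ∈ C, ∃ i : Fin (n + 1), ys i = c := by
    intro c hc
    have hcl : c ∈ l := by
      rw [Finset.mem_toList, Set.Finite.mem_toFinset]
      exact hc
    obtain ⟨j, hj, hval⟩ := List.mem_iff_getElem.mp hcl
    refine ⟨⟨j, lt_of_lt_of_le hj (by omega)⟩, ?_⟩
    show l.getD j m0 = c
    rw [List.getD_eq_getElem l m0 hj]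
    exact hval
  -- axioms in the model
  have hAx : ∀ n' : ℕ, Ax (L := L) φ n' ⊆ Th (L := L) φ := fun n' =>
    le_trans (Set.subset_iUnion (Ax (L := L) φ) n') (Set.subset_insert _ _)
  have hGA : ∀ i : Fin (n + 1),
      RelMap (L := L.sum QLang.{u, v}) (Qrel L (n + 2)) (Fin.snoc ys (ys i)) := by
    intro i
    have h1 := hTh (axA L n i) (hAx n (Or.inl (Or.inl ⟨i, rfl⟩)))
    unfold axA at h1
    have h2 := realize_oIAlls.mp h1 ys
    exact (realize_guard (L := L) (M := Mod) _ _ (default : Fin 0 → Mod)).mp h2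
  let s : Set Mod := {x | RelMap (L := L.sum QLang.{u, v}) (Qrel L (n + 2)) (Fin.snoc ys x)}
  have hfun : ∀ {k : ℕ} (f : L.Functions k) (zs : Fin k → Mod),
      (∀ j, zs j ∈ s) → funMap f zs ∈ s := by
    intro k f zs hzs
    have h1 := hTh (axB L n f)
      (hAx n (Or.inl (Or.inr (Set.mem_iUnion.mpr ⟨k, ⟨f, rfl⟩⟩))))
    unfold axB at h1
    have h2 := BoundedFormula.realize_alls.mp (realize_oIAlls.mp h1 ys) zs
    rw [BoundedFormula.realize_imp, BoundedFormula.realize_foldr_inf] at h2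
    have h3 : ∀ ψ ∈ List.ofFn fun j : Fin k =>
        guard (L := L) (n := n) (m := k) (Term.var (Sum.inr j)),
        ψ.Realize ys zs := by
      intro ψ hψ
      rw [List.mem_ofFn] at hψ
      obtain ⟨j, rfl⟩ := hψ
      exact (realize_guard (L := L) (M := Mod) _ _ zs).mpr (hzs j)
    exact (realize_guard (L := L) (M := Mod) _ _ zs).mp (h2 h3)
  let S : L.Substructure Mod := ⟨s, hfun⟩
  have hS : ∀ x : Mod, x ∈ S ↔
      RelMap (L := L.sum QLang.{u, v}) (Qrel L (n + 2)) (Fin.snoc ys x) := fun x => Iff.rfl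
  have hsub : C ⊆ (S : Set Mod) := by
    intro c hc
    obtain ⟨i, rfl⟩ := hcov c hc
    exact hGA i
  have hne : Nonempty S := ⟨⟨ys 0, hGA 0⟩⟩
  have hSφ : (S : Type max u v) ⊨ φ := hCcore S hsub hne
  have h1 := hTh (axC φ n) (hAx n (Or.inr rfl))
  unfold axC at h1
  have h2 := realize_oIAlls.mp h1 ys
  exact h2 ((realize_relv_sentence (L := L) (M := Mod) ys S hS φ
    (default : Fin 0 → Mod)).mpr hSφ)

end Stmt
end

section
/- Let τ be a vocabulary consisting of k unary predicate symbols and let φ be an FO(τ) sentence of quantifier rank r with φ ∈ PSC(B). Then, with n = r·2^k, φ is logically equivalent to the condition: there exist elements a₁,…,a_B such that for all elements b₁,…,b_n, the substructure induced on {a₁,…,a_B,b₁,…,b_n} satisfies φ. -/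
open FirstOrder Language

universe u v

namespace Stmt

variable {L : FirstOrder.Language.{u, v}}

/-- The quantifier rank of a bounded formula: the maximum depth of nesting of quantifiers. -/
def qr {α : Type*} : ∀ {n : ℕ}, L.BoundedFormula α n → ℕ
  | _, .falsum => 0
  | _, .equal _ _ => 0
  | _, .rel _ _ => 0
  | _, .imp f g => max (qr f) (qr g)
  | _, .all f => qr f + 1

/-- The vocabulary consisting of `k` unary predicate symbols (and nothing else). -/
def unaryLang (k : ℕ) : FirstOrder.Language :=
  ⟨fun _ => Empty, fun n => if n = 1 then Fin k else Empty⟩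

/-- `φ` is preserved under substructures: every (nonempty) substructure of every model of `φ`
satisfies `φ`. -/
def PS (φ : L.Sentence) : Prop :=
  ∀ (M : Type max u v) [L.Structure M] [Nonempty M], M ⊨ φ →
    ∀ N : L.Substructure M, (N : Set M).Nonempty → ↥N ⊨ φ

/-! ### Auxiliary machinery -/

section Aux

def relOf (k : ℕ) (i : Fin k) : (unaryLang k).Relations 1 := i

lemma relElim {k n : ℕ} (hn : n ≠ 1) (R : (unaryLang k).Relations n) {C : Prop} : C :=
  (cast (if_neg hn) R : Empty).elim

variable {k : ℕ} {M : Type} [(unaryLang k).Structure M]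

/-- The color (atomic type) of an element. -/
noncomputable def colorOf (k : ℕ) {M : Type} [(unaryLang k).Structure M] (x : M) :
    Fin k → Bool :=
  fun i => @decide (Structure.RelMap (relOf k i) (fun _ : Fin 1 => x)) (Classical.propDecidable _)

lemma colorOf_iff {x y : M} (h : colorOf k x = colorOf k y) (R : (unaryLang k).Relations 1) :
    Structure.RelMap R (fun _ : Fin 1 => x) ↔ Structure.RelMap R (fun _ : Fin 1 => y) := by
  have := decide_eq_decide.mp (congrFun h (show Fin k from R))
  exact this

/-- The transposition of two elements of the same color is an automorphism. -/
noncomputable def swapEquiv [DecidableEq M] (b b' : M) (hc : colorOf k b = colorOf k b') :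
    M ≃[unaryLang k] M where
  toEquiv := Equiv.swap b b'
  map_fun' := fun {n} f _ => f.elim
  map_rel' := by
    intro n R x
    match n with
    | 0 => exact relElim (by omega) R
    | 1 =>
      have hx : x = fun _ : Fin 1 => x 0 := funext fun j => by rw [Subsingleton.elim j 0]
      rw [hx]
      show Structure.RelMap R (fun _ : Fin 1 => Equiv.swap b b' (x 0)) ↔ _
      rcases eq_or_ne (x 0) b with h1 | h1
      · rw [h1, Equiv.swap_apply_left]; exact (colorOf_iff hc.symm R)
      rcases eq_or_ne (x 0) b' with h2 | h2
      · rw [h2, Equiv.swap_apply_right]; exact (colorOf_iff hc R)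
      · rw [Equiv.swap_apply_of_ne_of_ne h1 h2]
    | (n+2) => exact relElim (by omega) R

/-- Main Ehrenfeucht–Fraïssé style lemma: a substructure containing, for each color,
either all elements of that color or at least `m` of them, agrees with the ambient
structure on all formulas `ψ` with `qr ψ + (number of free variables) ≤ m`. -/
lemma main_lemma {m : ℕ} (N : (unaryLang k).Substructure M)
    (good : ∀ c : Fin k → Bool, ({x : M | colorOf k x = c} ⊆ (N : Set M)) ∨
        ∃ s : Finset M, ↑s ⊆ (N : Set M) ∧ s.card = m ∧ ∀ x ∈ s, colorOf k x = c)
    {n : ℕ} (ψ : (unaryLang k).BoundedFormula Empty n) :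
    qr ψ + n ≤ m → ∀ v : Fin n → ↥N,
      ψ.Realize (fun e : Empty => e.elim) (Subtype.val ∘ v) ↔
        ψ.Realize (fun e : Empty => e.elim) v := by
  induction ψ with
  | falsum => exact fun _ _ => Iff.rfl
  | @equal n t₁ t₂ =>
    intro _ v
    show t₁.realize (Sum.elim _ _) = t₂.realize (Sum.elim _ _) ↔
      t₁.realize (Sum.elim _ _) = t₂.realize (Sum.elim _ _)
    have key : ∀ t : (unaryLang k).Term (Empty ⊕ Fin n),
        t.realize (Sum.elim (fun e : Empty => e.elim) (Subtype.val ∘ v)) =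
          (t.realize (Sum.elim (fun e : Empty => e.elim) v) : ↥N) := by
      intro t
      have : (Sum.elim (fun e : Empty => e.elim) (Subtype.val ∘ v) : Empty ⊕ Fin n → M) =
          (N.subtype : ↥N → M) ∘ Sum.elim (fun e : Empty => e.elim) v := by
        funext a; rcases a with e | i; exact e.elim; rfl
      rw [this, HomClass.realize_term]
      rfl
    rw [key t₁, key t₂]
    exact ⟨fun h => Subtype.val_injective h, fun h => congrArg _ h⟩
  | @rel n l R ts =>
    intro _ v
    show Structure.RelMap R _ ↔ Structure.RelMap R _
    have key : ∀ t : (unaryLang k).Term (Empty ⊕ Fin n),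
        t.realize (Sum.elim (fun e : Empty => e.elim) (Subtype.val ∘ v)) =
          (t.realize (Sum.elim (fun e : Empty => e.elim) v) : ↥N) := by
      intro t
      have : (Sum.elim (fun e : Empty => e.elim) (Subtype.val ∘ v) : Empty ⊕ Fin n → M) =
          (N.subtype : ↥N → M) ∘ Sum.elim (fun e : Empty => e.elim) v := by
        funext a; rcases a with e | i; exact e.elim; rfl
      rw [this, HomClass.realize_term]
      rfl
    have heq : (fun i => (ts i).realize
        (Sum.elim (fun e : Empty => e.elim) (Subtype.val ∘ v))) =
        (N.subtype : ↥N → M) ∘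
          fun i => (ts i).realize (Sum.elim (fun e : Empty => e.elim) v) := by
      funext i; rw [key (ts i)]; rfl
    rw [heq]
    exact N.subtype.map_rel R _
  | @imp n f g ihf ihg =>
    intro hq v
    have h1 : qr f + n ≤ m := le_trans (Nat.add_le_add_right (le_max_left _ _) n) hq
    have h2 : qr g + n ≤ m := le_trans (Nat.add_le_add_right (le_max_right _ _) n) hq
    exact imp_congr (ihf h1 v) (ihg h2 v)
  | @all n θ ih =>
    intro hq v
    have hθ : qr θ + (n + 1) ≤ m := by
      have h' : qr θ.all + n ≤ m := hq
      simp only [qr] at h'; omega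
    constructor
    · intro hM x
      refine (ih hθ (Fin.snoc v x)).mp ?_
      have hsn : (Subtype.val ∘ Fin.snoc v x : Fin (n+1) → M) =
          Fin.snoc (Subtype.val ∘ v) (x : M) := Fin.comp_snoc _ _ _
      rw [hsn]
      exact hM (x : M)
    · intro hN b
      show θ.Realize _ (Fin.snoc (Subtype.val ∘ v) b)
      classical
      by_cases hb : b ∈ N
      · have := (ih hθ (Fin.snoc v ⟨b, hb⟩)).mpr (hN ⟨b, hb⟩)
        rwa [show (Subtype.val ∘ Fin.snoc v ⟨b, hb⟩ : Fin (n+1) → M) =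
            Fin.snoc (Subtype.val ∘ v) b from Fin.comp_snoc _ _ _] at this
      · rcases good (colorOf k b) with hsub | ⟨s, hsN, hscard, hscol⟩
        · exact absurd (hsub (by simp)) hb
        · obtain ⟨b', hb's, hb'v⟩ :
              ∃ b' ∈ s, b' ∉ Finset.image (fun i => (v i : M)) Finset.univ := by
            by_contra hcon
            push_neg at hcon
            have hle : s.card ≤ n := le_trans (Finset.card_le_card hcon)
              (le_trans Finset.card_image_le (by simp))
            omega
          have hb'N : b' ∈ N := hsN hb's
          have hcc : colorOf k b = colorOf k b' := (hscol b' hb's).symm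
          have hreal : θ.Realize (fun e : Empty => e.elim)
              (Fin.snoc (Subtype.val ∘ v) b') := by
            have := (ih hθ (Fin.snoc v ⟨b', hb'N⟩)).mpr (hN ⟨b', hb'N⟩)
            rwa [show (Subtype.val ∘ Fin.snoc v ⟨b', hb'N⟩ : Fin (n+1) → M) =
                Fin.snoc (Subtype.val ∘ v) b' from Fin.comp_snoc _ _ _] at this
          set σ := swapEquiv b b' hcc with hσ
          have hmain := (StrongHomClass.realize_boundedFormula σ θ
            (v := fun e : Empty => e.elim) (xs := Fin.snoc (Subtype.val ∘ v) b')).mpr hreal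
          have hv : (⇑σ ∘ Fin.snoc (Subtype.val ∘ v) b' : Fin (n+1) → M) =
              Fin.snoc (Subtype.val ∘ v) b := by
            funext i
            refine Fin.lastCases ?_ (fun j => ?_) i
            · simp only [Function.comp_apply, Fin.snoc_last]
              exact Equiv.swap_apply_right b b'
            · simp only [Function.comp_apply, Fin.snoc_castSucc]
              have h1 : (v j : M) ≠ b := fun h => hb (h ▸ (v j).2)
              have h2 : (v j : M) ≠ b' := fun h =>
                hb'v (Finset.mem_image.mpr ⟨j, Finset.mem_univ j, h⟩)
              exact Equiv.swap_apply_of_ne_of_ne h1 h2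
          have he : (⇑σ ∘ (fun e : Empty => e.elim) : Empty → M) = fun e : Empty => e.elim :=
            funext fun e => e.elim
          rwa [he, hv] at hmain

lemma models_iff' {L' : FirstOrder.Language.{u, v}} (M : Type max u v) [L'.Structure M]
    (φ : L'.Sentence) :
    M ⊨ φ ↔ BoundedFormula.Realize φ (fun e : Empty => (e.elim : M))
      (fun i : Fin 0 => (i.elim0 : M)) := by
  have h1 : (default : Empty → M) = fun e : Empty => e.elim := funext fun e => e.elim
  have h2 : (default : Fin 0 → M) = fun i : Fin 0 => i.elim0 := funext fun i => i.elim0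
  rw [Sentence.Realize, Formula.Realize, h1, h2]

lemma pad {M : Type*} [Nonempty M] (s : Finset M) {B : ℕ} (h : s.card ≤ B) :
    ∃ a : Fin B → M, ↑s ⊆ Set.range a := by
  refine ⟨fun i => if h' : (i : ℕ) < s.card then (s.equivFin.symm ⟨i, h'⟩ : M)
    else Classical.arbitrary M, ?_⟩
  intro x hx
  refine ⟨⟨(s.equivFin ⟨x, hx⟩ : ℕ), lt_of_lt_of_le (s.equivFin ⟨x, hx⟩).isLt h⟩, ?_⟩
  simp only [dif_pos (s.equivFin ⟨x, hx⟩).isLt]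
  rw [show (⟨((s.equivFin ⟨x, hx⟩ : ℕ)), (s.equivFin ⟨x, hx⟩).isLt⟩ : Fin s.card)
      = s.equivFin ⟨x, hx⟩ from Fin.ext rfl, Equiv.symm_apply_apply]

lemma color_finset {M : Type*} (r : ℕ) (P : M → Prop) :
    ∃ s : Finset M, s.card ≤ r ∧ (∀ x ∈ s, P x) ∧
      (s.card = r ∨ ∀ x : M, P x → x ∈ s) := by
  classical
  by_cases hf : {x : M | P x}.Finite
  · rcases le_or_gt r hf.toFinset.card with hle | hlt
    · obtain ⟨t, hts, htc⟩ := Finset.exists_subset_card_eq hle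
      exact ⟨t, htc.le, fun x hx => (hf.mem_toFinset.mp (hts hx)), Or.inl htc⟩
    · exact ⟨hf.toFinset, hlt.le, fun x hx => hf.mem_toFinset.mp hx,
        Or.inr fun x hx => hf.mem_toFinset.mpr hx⟩
  · obtain ⟨t, hts, htc⟩ := Set.Infinite.exists_subset_card_eq hf r
    exact ⟨t, htc.le, fun x hx => hts hx, Or.inl htc⟩

noncomputable def eqvFin (r k : ℕ) : (Fin r × (Fin k → Bool)) ≃ Fin (r * 2 ^ k) :=
  Fintype.equivFinOfCardEq (by simp)

end Aux

/-- Let `τ` be a vocabulary of `k` unary predicate symbols and `φ` an FO(τ) sentence of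
quantifier rank `r` with `φ ∈ PSC(B)`. Then, with `n = r·2^k`, `φ` is logically equivalent to:
there exist elements `a₁,…,a_B` such that for all elements `b₁,…,b_n`, the substructure
induced on `{a₁,…,a_B,b₁,…,b_n}` satisfies `φ`. -/
theorem statement5 (k B r : ℕ) (φ : (unaryLang k).Sentence) (hr : qr φ = r)
    (h : PSC φ B) :
    ∀ (M : Type) [(unaryLang k).Structure M] [Nonempty M],
      M ⊨ φ ↔
        ∃ a : Fin B → M, ∀ b : Fin (r * 2 ^ k) → M,
          ↥(Substructure.closure (unaryLang k) (Set.range a ∪ Set.range b)) ⊨ φ := by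
  intro M _ _
  constructor
  · intro hM
    obtain ⟨C, hCcard, hcore⟩ := h M hM
    obtain ⟨a, haC⟩ := pad C hCcard
    refine ⟨a, fun b => ?_⟩
    set N := Substructure.closure (unaryLang k) (Set.range a ∪ Set.range b) with hNdef
    rcases Nat.eq_zero_or_pos r with hr0 | hrpos
    · -- degenerate case: `φ` is quantifier-free, transfer directly
      have good : ∀ c : Fin k → Bool, ({x : M | colorOf k x = c} ⊆ (N : Set M)) ∨
          ∃ s : Finset M, ↑s ⊆ (N : Set M) ∧ s.card = 0 ∧ ∀ x ∈ s, colorOf k x = c :=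
        fun c => Or.inr ⟨∅, by simp, by simp, by simp⟩
      have hiff := main_lemma N good φ (by simp [hr, hr0]) (fun i : Fin 0 => i.elim0)
      rw [models_iff'] at hM ⊢
      have hvv : (Subtype.val ∘ (fun i : Fin 0 => (i.elim0 : ↥N)) : Fin 0 → M) =
          fun i : Fin 0 => i.elim0 := funext fun i => i.elim0
      rw [hvv] at hiff
      exact hiff.mp hM
    · -- nondegenerate: use the core
      have hb0 : b ⟨0, by positivity⟩ ∈ N :=
        Substructure.subset_closure (Or.inr ⟨⟨0, by positivity⟩, rfl⟩)
      have hne : Nonempty ↥N := ⟨⟨b ⟨0, by positivity⟩, hb0⟩⟩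
      refine hcore N ?_ hne
      exact subset_trans haC (subset_trans Set.subset_union_left Substructure.subset_closure)
  · rintro ⟨a, hab⟩
    classical
    -- pick, for each color, a finset witnessing "all of the color or at least r many"
    choose sc hsc_card hsc_col hsc_alt using
      fun c : Fin k → Bool => color_finset (M := M) r (fun x => colorOf k x = c)
    choose ec hec using fun c : Fin k → Bool => pad (sc c) (hsc_card c)
    set eqv := eqvFin r k with heqv
    set b : Fin (r * 2 ^ k) → M := fun j => ec (eqv.symm j).2 (eqv.symm j).1 with hbdef
    have hb : ∀ c : Fin k → Bool, ↑(sc c) ⊆ Set.range b := by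
      intro c x hx
      obtain ⟨i, hi⟩ := hec c hx
      refine ⟨eqv (i, c), ?_⟩
      simp only [hbdef, Equiv.symm_apply_apply]
      exact hi
    have hN := hab b
    set N := Substructure.closure (unaryLang k) (Set.range a ∪ Set.range b) with hNdef
    have hrangeb : Set.range b ⊆ (N : Set M) :=
      subset_trans Set.subset_union_right Substructure.subset_closure
    have good : ∀ c : Fin k → Bool, ({x : M | colorOf k x = c} ⊆ (N : Set M)) ∨
        ∃ s : Finset M, ↑s ⊆ (N : Set M) ∧ s.card = r ∧ ∀ x ∈ s, colorOf k x = c := by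
      intro c
      rcases hsc_alt c with hcard | hall
      · exact Or.inr ⟨sc c, subset_trans (hb c) hrangeb, hcard, hsc_col c⟩
      · exact Or.inl fun x hx => hrangeb (hb c (hall x hx))
    have hiff := main_lemma N good φ (by simp [hr]) (fun i : Fin 0 => i.elim0)
    rw [models_iff'] at hN ⊢
    have hvv : (Subtype.val ∘ (fun i : Fin 0 => (i.elim0 : ↥N)) : Fin 0 → M) =
        fun i : Fin 0 => i.elim0 := funext fun i => i.elim0
    rw [hvv] at hiff
    exact hiff.mpr hN

end Stmt
end

section
/- For an FO sentence φ over a relational vocabulary and k, l ∈ ℕ, the following are equivalent: (1) φ ∈ PSC(k) and ¬φ ∈ PSC(l); (2) φ is logically equivalent both to a sentence of the form ∃x₁…∃x_k ∀y₁…∀y_l β₁ and to a sentence of the form ∀y₁…∀y_l ∃x₁…∃x_k β₂, with β₁, β₂ quantifier-free. -/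
open FirstOrder Language

universe u v

namespace Stmt

variable {L : FirstOrder.Language.{u, v}}

section Realize
variable {M : Type*} [L.Structure M] {n : ℕ}

lemma append_zero_eq (xs : Fin n → M) (ys : Fin 0 → M) : Fin.append xs ys = xs := by
  rw [show ys = Fin.elim0 from funext fun i => i.elim0, Fin.append_elim0]
  rfl

theorem realize_allsK : ∀ {j : ℕ} (β : L.BoundedFormula Empty (n + j)) (v : Empty → M)
    (xs : Fin n → M), (allsK j β).Realize v xs ↔ ∀ ys : Fin j → M, β.Realize v (Fin.append xs ys)
  | 0, β, v, xs => by
    simp only [allsK]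
    exact ⟨fun h ys => by rw [append_zero_eq]; exact h,
      fun h => by have := h Fin.elim0; rwa [append_zero_eq] at this⟩
  | j + 1, β, v, xs => by
    rw [allsK, realize_allsK β.all]
    simp only [BoundedFormula.realize_all]
    constructor
    · intro h ys
      rw [← Fin.snoc_init_self ys, Fin.append_snoc]
      exact h (Fin.init ys) (ys (Fin.last j))
    · intro h ys z
      have := h (Fin.snoc ys z)
      rwa [Fin.append_snoc] at this

theorem realize_exsK : ∀ {j : ℕ} (β : L.BoundedFormula Empty (n + j)) (v : Empty → M)
    (xs : Fin n → M), (exsK j β).Realize v xs ↔ ∃ ys : Fin j → M, β.Realize v (Fin.append xs ys)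
  | 0, β, v, xs => by
    simp only [exsK]
    exact ⟨fun h => ⟨Fin.elim0, by rwa [append_zero_eq]⟩,
      fun ⟨ys, h⟩ => by rwa [append_zero_eq] at h⟩
  | j + 1, β, v, xs => by
    rw [exsK, realize_exsK β.ex]
    simp only [BoundedFormula.realize_ex]
    constructor
    · rintro ⟨ys, z, h⟩
      exact ⟨Fin.snoc ys z, by rwa [Fin.append_snoc]⟩
    · rintro ⟨ys, h⟩
      refine ⟨Fin.init ys, ys (Fin.last j), ?_⟩
      rwa [← Fin.append_snoc, Fin.snoc_init_self]

end Realize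

theorem realize_sigma2 {M : Type max u v} [L.Structure M] {B n : ℕ}
    (β : L.BoundedFormula Empty (B + n)) :
    M ⊨ sigma2 B n β ↔ ∃ xs : Fin B → M, ∀ ys : Fin n → M,
      β.Realize default (Fin.append xs ys) := by
  rw [sigma2, Sentence.Realize, BoundedFormula.realize_exs]
  constructor
  · rintro ⟨xs, h⟩
    exact ⟨xs, (realize_allsK β default xs).1 h⟩
  · rintro ⟨xs, h⟩
    exact ⟨xs, (realize_allsK β default xs).2 h⟩

theorem realize_pi2 {M : Type max u v} [L.Structure M] {k m : ℕ}
    (β : L.BoundedFormula Empty (k + m)) :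
    M ⊨ pi2 k m β ↔ ∀ xs : Fin k → M, ∃ ys : Fin m → M,
      β.Realize default (Fin.append xs ys) := by
  rw [pi2, Sentence.Realize, BoundedFormula.realize_alls]
  constructor
  · intro h xs
    exact (realize_exsK β default xs).1 (h xs)
  · intro h xs
    exact (realize_exsK β default xs).2 (h xs)


/-! ### Atomic data -/

/-- Index type for the terms built from `n` variables and constants. -/
def Tms (L : FirstOrder.Language.{u, v}) (n : ℕ) : Type _ := Fin n ⊕ L.Functions 0

/-- The term corresponding to an element of `Tms`. -/
def tmT {n : ℕ} : Tms L n → L.Term (Empty ⊕ Fin n) :=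
  Sum.elim (fun i => Term.var (Sum.inr i)) (fun c => Constants.term c)

/-- The value of such a term under an assignment. -/
def tmVal {M : Type*} [L.Structure M] {n : ℕ} (xs : Fin n → M) : Tms L n → M :=
  Sum.elim xs (fun c => Structure.funMap c Fin.elim0)

lemma realize_tmT {M : Type*} [L.Structure M] {n : ℕ} (v : Empty → M) (xs : Fin n → M)
    (s : Tms L n) : (tmT s).realize (Sum.elim v xs) = tmVal xs s := by
  cases s with
  | inl i => rfl
  | inr c =>
    show Structure.funMap c _ = Structure.funMap c _
    exact congrArg _ (funext fun i => i.elim0)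

/-- Index type for atomic formulas in `n` variables. -/
def AtomIdx (L : FirstOrder.Language.{u, v}) (n : ℕ) : Type _ :=
  (Tms L n × Tms L n) ⊕ (Σ p : (Σ m, L.Relations m), Fin p.1 → Tms L n)

/-- The atomic formula corresponding to an index. -/
def atomF {n : ℕ} : AtomIdx L n → L.BoundedFormula Empty n
  | .inl (s, t) => (tmT s).bdEqual (tmT t)
  | .inr ⟨⟨_, R⟩, ts⟩ => R.boundedFormula (fun i => tmT (ts i))

lemma atomF_isQF {n : ℕ} (a : AtomIdx L n) : (atomF a).IsQF := by
  rcases a with ⟨s, t⟩ | ⟨⟨m, R⟩, ts⟩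
  · exact (BoundedFormula.IsAtomic.equal _ _).isQF
  · exact (BoundedFormula.IsAtomic.rel _ _).isQF

/-- Whether an atomic formula holds of a tuple. -/
def atomEval {M : Type*} [L.Structure M] {n : ℕ} (xs : Fin n → M) (a : AtomIdx L n) : Prop :=
  (atomF a).Realize Empty.elim xs

lemma atomEval_inl {M : Type*} [L.Structure M] {n : ℕ} (xs : Fin n → M) (s t : Tms L n) :
    atomEval xs (.inl (s, t)) ↔ tmVal xs s = tmVal xs t := by
  unfold atomEval
  rw [atomF, BoundedFormula.realize_bdEqual, realize_tmT, realize_tmT]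

lemma atomEval_inr {M : Type*} [L.Structure M] {n m : ℕ} (xs : Fin n → M) (R : L.Relations m)
    (ts : Fin m → Tms L n) :
    atomEval xs (.inr ⟨⟨m, R⟩, ts⟩) ↔ Structure.RelMap R (fun i => tmVal xs (ts i)) := by
  unfold atomEval
  rw [atomF, BoundedFormula.realize_rel]
  simp only [realize_tmT]

lemma realize_atomF {M : Type*} [L.Structure M] {n : ℕ} (a : AtomIdx L n) (v : Empty → M)
    (xs : Fin n → M) : (atomF a).Realize v xs ↔ atomEval xs a := by
  rw [show v = Empty.elim from funext fun e => e.elim]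
  rfl

instance finiteConstants [Finite L.Symbols] : Finite (L.Functions 0) :=
  Finite.of_injective (fun c => (Sum.inl ⟨0, c⟩ : L.Symbols))
    (fun a b h => by
      have := Sum.inl_injective h
      exact (Sigma.mk.inj_iff.1 this).2.eq)

instance finiteRelsSigma [Finite L.Symbols] : Finite (Σ m, L.Relations m) :=
  Finite.of_injective (fun p => (Sum.inr p : L.Symbols)) Sum.inr_injective

instance finiteTms [Finite L.Symbols] {n : ℕ} : Finite (Tms L n) := by
  unfold Tms; infer_instance

instance finiteAtomIdx [Finite L.Symbols] {n : ℕ} : Finite (AtomIdx L n) := by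
  unfold AtomIdx; infer_instance

/-- Disjunction over a finset (the former `BoundedFormula.iSup`). -/
noncomputable def fsSup {α β : Type*} {n : ℕ} (s : Finset β) (f : β → L.BoundedFormula α n) :
    L.BoundedFormula α n :=
  (s.toList.map f).foldr (· ⊔ ·) ⊥

/-- Conjunction over a finset (the former `BoundedFormula.iInf`). -/
noncomputable def fsInf {α β : Type*} {n : ℕ} (s : Finset β) (f : β → L.BoundedFormula α n) :
    L.BoundedFormula α n :=
  (s.toList.map f).foldr (· ⊓ ·) ⊤

lemma realize_fsSup {M α β : Type*} [L.Structure M] {n : ℕ} {s : Finset β}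
    {f : β → L.BoundedFormula α n} {v : α → M} {v' : Fin n → M} :
    (fsSup s f).Realize v v' ↔ ∃ b ∈ s, (f b).Realize v v' := by
  simp only [fsSup, BoundedFormula.realize_foldr_sup, List.mem_map, Finset.mem_toList,
    exists_exists_and_eq_and]

lemma realize_fsInf {M α β : Type*} [L.Structure M] {n : ℕ} {s : Finset β}
    {f : β → L.BoundedFormula α n} {v : α → M} {v' : Fin n → M} :
    (fsInf s f).Realize v v' ↔ ∀ b ∈ s, (f b).Realize v v' := by
  simp only [fsInf, BoundedFormula.realize_foldr_inf, List.mem_map, Finset.mem_toList,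
    forall_exists_index, and_imp, forall_apply_eq_imp_iff₂]

open scoped Classical in
/-- The "complete atomic type" formula associated to a set of atoms. -/
noncomputable def typeF [Finite L.Symbols] {n : ℕ} (T : Set (AtomIdx L n)) :
    L.BoundedFormula Empty n :=
  haveI : Fintype (AtomIdx L n) := Fintype.ofFinite _
  fsInf Finset.univ (fun a => if a ∈ T then atomF a else (atomF a).not)

lemma isQF_foldr_inf {n : ℕ} (li : List (L.BoundedFormula Empty n))
    (h : ∀ ψ ∈ li, ψ.IsQF) : (li.foldr (· ⊓ ·) ⊤).IsQF := by
  induction li with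
  | nil => exact BoundedFormula.IsQF.top
  | cons a li ih =>
    exact (h a (List.mem_cons_self)).inf (ih fun ψ hψ => h ψ (List.mem_cons_of_mem a hψ))

lemma isQF_foldr_sup {n : ℕ} (li : List (L.BoundedFormula Empty n))
    (h : ∀ ψ ∈ li, ψ.IsQF) : (li.foldr (· ⊔ ·) ⊥).IsQF := by
  induction li with
  | nil => exact BoundedFormula.isQF_bot
  | cons a li ih =>
    exact (h a (List.mem_cons_self)).sup (ih fun ψ hψ => h ψ (List.mem_cons_of_mem a hψ))

lemma isQF_iInf {β : Type*} {n : ℕ} (s : Finset β) (f : β → L.BoundedFormula Empty n)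
    (h : ∀ b, (f b).IsQF) : (fsInf s f).IsQF := by
  refine isQF_foldr_inf _ fun ψ hψ => ?_
  obtain ⟨b, _, rfl⟩ := List.mem_map.1 hψ
  exact h b

lemma isQF_iSup {β : Type*} {n : ℕ} (s : Finset β) (f : β → L.BoundedFormula Empty n)
    (h : ∀ b, (f b).IsQF) : (fsSup s f).IsQF := by
  refine isQF_foldr_sup _ fun ψ hψ => ?_
  obtain ⟨b, _, rfl⟩ := List.mem_map.1 hψ
  exact h b

lemma typeF_isQF [Finite L.Symbols] {n : ℕ} (T : Set (AtomIdx L n)) : (typeF T).IsQF := by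
  classical
  refine isQF_iInf _ _ fun a => ?_
  split_ifs
  · exact atomF_isQF a
  · exact (atomF_isQF a).not

lemma realize_typeF [Finite L.Symbols] {M : Type*} [L.Structure M] {n : ℕ}
    (T : Set (AtomIdx L n)) (v : Empty → M) (xs : Fin n → M) :
    (typeF T).Realize v xs ↔ T = {a | atomEval xs a} := by
  classical
  haveI : Fintype (AtomIdx L n) := Fintype.ofFinite _
  unfold typeF
  rw [realize_fsInf]
  constructor
  · intro h
    ext a
    have ha := h a (@Finset.mem_univ _ (Fintype.ofFinite _) a)
    by_cases haT : a ∈ T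
    · rw [if_pos haT] at ha
      rw [realize_atomF] at ha
      exact ⟨fun _ => ha, fun _ => haT⟩
    · rw [if_neg haT, BoundedFormula.realize_not, realize_atomF] at ha
      exact ⟨fun h' => absurd h' haT, fun h' => absurd h' ha⟩
  · rintro rfl a _
    by_cases haT : a ∈ {a | atomEval xs a}
    · rw [if_pos haT, realize_atomF]; exact haT
    · rw [if_neg haT, BoundedFormula.realize_not, realize_atomF]; exact haT


/-! ### Substructures on ranges of term values -/

section RangeSub
variable [∀ m, IsEmpty (L.Functions (m + 1))]

/-- The substructure on the set of values of terms from a tuple. -/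
def rangeSub {M : Type*} [L.Structure M] {n : ℕ} (xs : Fin n → M) : L.Substructure M where
  carrier := Set.range (tmVal xs)
  fun_mem := by
    intro m f
    match m, f with
    | 0, f =>
      intro x _
      refine ⟨Sum.inr f, ?_⟩
      show Structure.funMap f Fin.elim0 = Structure.funMap f x
      exact congrArg _ (funext fun i => i.elim0)
    | m + 1, f => exact isEmptyElim f

lemma mem_rangeSub {M : Type*} [L.Structure M] {n : ℕ} (xs : Fin n → M) (s : Tms L n) :
    tmVal xs s ∈ rangeSub (L := L) xs :=
  ⟨s, rfl⟩

lemma mem_rangeSub_iff {M : Type*} [L.Structure M] {n : ℕ} (xs : Fin n → M) (x : M) :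
    x ∈ rangeSub (L := L) xs ↔ ∃ s : Tms L n, tmVal xs s = x :=
  Iff.rfl

/-- An index for an element of a range substructure. -/
noncomputable def idxOf {M : Type*} [L.Structure M] {n : ℕ} {v : Fin n → M}
    (x : ↥(rangeSub (L := L) v)) : Tms L n :=
  Classical.choose ((mem_rangeSub_iff v ↑x).1 x.2)

lemma idxOf_spec {M : Type*} [L.Structure M] {n : ℕ} {v : Fin n → M} (x : ↥(rangeSub (L := L) v)) :
    tmVal v (idxOf x) = ↑x :=
  Classical.choose_spec ((mem_rangeSub_iff v ↑x).1 x.2)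

variable {M M' : Type*} [L.Structure M] [L.Structure M'] {n : ℕ}
  (v : Fin n → M) (v' : Fin n → M')
  (h : ∀ a : AtomIdx L n, atomEval v a ↔ atomEval v' a)

include h in
lemma tmVal_eq_iff (s t : Tms L n) : tmVal v s = tmVal v t ↔ tmVal v' s = tmVal v' t :=
  (atomEval_inl v s t).symm.trans ((h _).trans (atomEval_inl v' s t))

/-- The underlying map of the isomorphism between range substructures. -/
noncomputable def rmap : ↥(rangeSub (L := L) v) → ↥(rangeSub (L := L) v') := fun x =>
  ⟨tmVal v' (idxOf x), mem_rangeSub v' _⟩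

include h in
lemma rmap_coe (x : ↥(rangeSub (L := L) v)) (s : Tms L n) (hx : (x : M) = tmVal v s) :
    ((rmap v v' x : ↥(rangeSub (L := L) v')) : M') = tmVal v' s := by
  have hc : tmVal v (idxOf x) = tmVal v s := (idxOf_spec x).trans hx
  exact (tmVal_eq_iff v v' h _ s).1 hc

/-- The isomorphism between range substructures of tuples with equal atomic types. -/
noncomputable def rangeEquiv : ↥(rangeSub (L := L) v) ≃[L] ↥(rangeSub (L := L) v') where
  toFun := rmap v v'
  invFun := rmap v' v
  left_inv := by
    intro x
    have h1 := rmap_coe v v' h x (idxOf x) (idxOf_spec x).symm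
    have h2 := rmap_coe v' v (fun a => (h a).symm) _ (idxOf x) h1
    exact Subtype.ext (h2.trans (idxOf_spec x))
  right_inv := by
    intro x
    have h1 := rmap_coe v' v (fun a => (h a).symm) x (idxOf x) (idxOf_spec x).symm
    have h2 := rmap_coe v v' h _ (idxOf x) h1
    exact Subtype.ext (h2.trans (idxOf_spec x))
  map_fun' := by
    intro m f x
    match m, f with
    | 0, f =>
      refine Subtype.ext ?_
      have h1 : ((Structure.funMap f x : ↥(rangeSub v)) : M) = tmVal v (Sum.inr f) := by
        show Structure.funMap f _ = Structure.funMap f _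
        exact congrArg _ (funext fun i => i.elim0)
      have h2 := rmap_coe v v' h _ (Sum.inr f) h1
      rw [h2]
      show Structure.funMap f Fin.elim0 = _
      exact congrArg (Structure.funMap f) (funext fun i : Fin 0 => i.elim0)
    | m + 1, f => exact isEmptyElim f
  map_rel' := by
    intro m r x
    show Structure.RelMap r (fun i => ((rmap v v' (x i) : ↥(rangeSub v')) : M')) ↔
      Structure.RelMap r (fun i => ((x i : ↥(rangeSub v)) : M))
    have h1 : (fun i => ((x i : ↥(rangeSub v)) : M)) = fun i => tmVal v (idxOf (x i)) :=
      funext fun i => (idxOf_spec (x i)).symm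
    have h2 : (fun i => ((rmap v v' (x i) : ↥(rangeSub v')) : M')) =
        fun i => tmVal v' (idxOf (x i)) :=
      funext fun i => rmap_coe v v' h (x i) _ (idxOf_spec (x i)).symm
    rw [h1, h2, ← atomEval_inr v r (fun i => idxOf (x i)),
      ← atomEval_inr v' r (fun i => idxOf (x i))]
    exact (h _).symm

include h in
/-- Transfer of sentences along the range isomorphism. -/
lemma realize_rangeSub_iff (ψ : L.Sentence) :
    Sentence.Realize (M := ↥(rangeSub (L := L) v)) ψ ↔ Sentence.Realize (M := ↥(rangeSub (L := L) v')) ψ :=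
  StrongHomClass.realize_sentence (rangeEquiv v v' h) ψ

end RangeSub


/-! ### Singleton substructures (degenerate case) -/

section Single
variable [∀ m, IsEmpty (L.Functions (m + 1))]

/-- The singleton substructure, in a language with no function symbols. -/
def singleSub (hc : IsEmpty (L.Functions 0)) {M : Type*} [L.Structure M] (x : M) :
    L.Substructure M where
  carrier := {x}
  fun_mem := by
    intro m f
    match m, f with
    | 0, f => exact hc.elim f
    | m + 1, f => exact isEmptyElim f

/-- An isomorphism between singleton substructures whose points satisfy the same relations. -/
noncomputable def singleEquiv (hc : IsEmpty (L.Functions 0)) {M M' : Type*} [L.Structure M]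
    [L.Structure M'] (x : M) (y : M')
    (hrel : ∀ (m : ℕ) (R : L.Relations m),
      Structure.RelMap R (fun _ : Fin m => x) ↔ Structure.RelMap R (fun _ : Fin m => y)) :
    ↥(singleSub hc x) ≃[L] ↥(singleSub hc y) where
  toFun := fun _ => ⟨y, rfl⟩
  invFun := fun _ => ⟨x, rfl⟩
  left_inv := by
    intro a
    exact Subtype.ext (a.2 : (a : M) ∈ ({x} : Set M)).symm
  right_inv := by
    intro a
    exact Subtype.ext (a.2 : (a : M') ∈ ({y} : Set M')).symm
  map_fun' := by
    intro m f z
    match m, f with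
    | 0, f => exact hc.elim f
    | m + 1, f => exact isEmptyElim f
  map_rel' := by
    intro m r z
    show Structure.RelMap r (fun i => (((⟨y, rfl⟩ : ↥(singleSub hc y))) : M')) ↔
      Structure.RelMap r (fun i => ((z i : ↥(singleSub hc x)) : M))
    have h1 : (fun i : Fin m => ((z i : ↥(singleSub hc x)) : M)) = fun _ => x :=
      funext fun i => ((z i).2 : ((z i : ↥(singleSub hc x)) : M) ∈ ({x} : Set M))
    rw [h1]
    exact (hrel m r).symm

end Single

open scoped Classical in
/-- The two-point structure used in the degenerate case. -/
noncomputable def WStr (hc : IsEmpty (L.Functions 0)) [∀ m, IsEmpty (L.Functions (m + 1))]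
    {M M' : Type*} [L.Structure M] [L.Structure M'] (m₀ : M) (m₀' : M') :
    L.Structure (ULift.{max u v} Bool) where
  funMap := fun {m} f => by
    match m, f with
    | 0, f => exact hc.elim f
    | m + 1, f => exact isEmptyElim f
  RelMap := fun {m} R x =>
    if ∀ i, x i = ⟨true⟩ then Structure.RelMap R (fun _ : Fin m => m₀')
    else Structure.RelMap R (fun _ : Fin m => m₀)

/-! ### Covering a finset by a tuple -/

lemma exists_tuple_cover {M : Type*} [Nonempty M] (C : Finset M) {n : ℕ} (h : C.card ≤ n) :
    ∃ f : Fin n → M, ↑C ⊆ Set.range f := by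
  classical
  refine ⟨fun i => if h' : (i : ℕ) < C.toList.length then C.toList.get ⟨i, h'⟩
    else Classical.arbitrary M, fun x hx => ?_⟩
  have hx' : x ∈ C.toList := Finset.mem_toList.2 hx
  obtain ⟨⟨i, hi⟩, hget⟩ := List.mem_iff_get.1 hx'
  have hin : i < n := lt_of_lt_of_le (by simpa [Finset.length_toList] using hi) h
  refine ⟨⟨i, hin⟩, ?_⟩
  simp only []
  rw [dif_pos (by simpa using hi)]
  exact hget

/-! ### Quantifier-free formulas and embeddings -/

lemma comp_append {α β : Type*} {m n : ℕ} (f : α → β) (a : Fin m → α) (b : Fin n → α) :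
    f ∘ Fin.append a b = Fin.append (f ∘ a) (f ∘ b) := by
  funext i
  refine Fin.addCases (fun i => ?_) (fun i => ?_) i
  · simp [Fin.append_left]
  · simp [Fin.append_right]

lemma IsQF.realize_embedding {M N : Type*} [L.Structure M] [L.Structure N] (f : N ↪[L] M)
    {n : ℕ} {β : L.BoundedFormula Empty n} (h : β.IsQF) (v : Empty → N) (xs : Fin n → N) :
    β.Realize (⇑f ∘ v) (⇑f ∘ xs) ↔ β.Realize v xs := by
  induction h with
  | falsum => exact Iff.rfl
  | of_isAtomic h' =>
    cases h' with
    | equal t₁ t₂ =>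
      rw [BoundedFormula.realize_bdEqual, BoundedFormula.realize_bdEqual, ← Sum.comp_elim,
        HomClass.realize_term, HomClass.realize_term]
      exact f.injective.eq_iff
    | rel R ts =>
      rw [BoundedFormula.realize_rel, BoundedFormula.realize_rel, ← Sum.comp_elim]
      simp only [HomClass.realize_term]
      exact StrongHomClass.map_rel f R _
  | imp _ _ ih1 ih2 =>
    rw [BoundedFormula.realize_imp, BoundedFormula.realize_imp, ih1, ih2]



/-! ### Main lemmas -/

lemma IsCore.mono {φ : L.Sentence} {M : Type max u v} [L.Structure M] {C C' : Set M}
    (h : IsCore φ M C) (hsub : C ⊆ C') : IsCore φ M C' :=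
  fun N hN hNe => h N (hsub.trans hN) hNe

lemma psc_not_not {φ : L.Sentence} {k : ℕ} (h : PSC φ k) : PSC φ.not.not k := by
  intro M iM iNe hm
  rw [Sentence.realize_not, Sentence.realize_not, not_not] at hm
  obtain ⟨C, hC, hcore⟩ := h M hm
  refine ⟨C, hC, fun N hN hNe => ?_⟩
  rw [Sentence.realize_not, Sentence.realize_not, not_not]
  exact hcore N hN hNe

lemma equiv_pi2_of_equiv_not_sigma2 {φ : L.Sentence} {l k : ℕ}
    (γ : L.BoundedFormula Empty (l + k)) (h : Equiv φ.not (sigma2 l k γ)) :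
    Equiv φ (pi2 l k γ.not) := by
  intro M iM iNe
  have h1 := h M
  rw [Sentence.realize_not, realize_sigma2] at h1
  rw [realize_pi2]
  constructor
  · intro hm xs
    by_contra hno
    push_neg at hno
    simp only [BoundedFormula.realize_not, not_not] at hno
    exact h1.2 ⟨xs, hno⟩ hm
  · intro hp
    by_contra hnm
    obtain ⟨xs, hxs⟩ := h1.1 hnm
    obtain ⟨ys, hys⟩ := hp xs
    rw [BoundedFormula.realize_not] at hys
    exact hys (hxs ys)

lemma equiv_not_sigma2_of_equiv_pi2 {φ : L.Sentence} {l k : ℕ}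
    (β : L.BoundedFormula Empty (l + k)) (h : Equiv φ (pi2 l k β)) :
    Equiv φ.not (sigma2 l k β.not) := by
  intro M iM iNe
  have h1 := h M
  rw [realize_pi2] at h1
  rw [Sentence.realize_not, realize_sigma2, h1]
  constructor
  · intro hno
    push_neg at hno
    obtain ⟨xs, hxs⟩ := hno
    exact ⟨xs, fun ys => BoundedFormula.realize_not.2 (hxs ys)⟩
  · rintro ⟨xs, hxs⟩ hall
    obtain ⟨ys, hys⟩ := hall xs
    exact BoundedFormula.realize_not.1 (hxs ys) hys

lemma psc_of_equiv_sigma2 {φ : L.Sentence} {k l : ℕ} {β : L.BoundedFormula Empty (k + l)}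
    (hqf : β.IsQF) (he : Equiv φ (sigma2 k l β)) : PSC φ k := by
  classical
  intro M iM iNe hm
  obtain ⟨a, hall⟩ := (realize_sigma2 β).1 ((he M).1 hm)
  refine ⟨Finset.image a Finset.univ, le_trans Finset.card_image_le (by simp), ?_⟩
  intro N hN hNe
  haveI := hNe
  have hmem : ∀ i, a i ∈ N := fun i => hN (by simp)
  rw [he ↥N, realize_sigma2]
  refine ⟨fun i => ⟨a i, hmem i⟩, fun ys => ?_⟩
  have h2 := IsQF.realize_embedding N.subtype hqf default
      (Fin.append (fun i => (⟨a i, hmem i⟩ : ↥N)) ys)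
  rw [comp_append] at h2
  have e0 : (⇑(Substructure.subtype N) ∘ (default : Empty → ↥N)) = (default : Empty → M) :=
    funext fun e => e.elim
  have e1 : (⇑(Substructure.subtype N) ∘ fun i => (⟨a i, hmem i⟩ : ↥N)) = a := rfl
  have e2 : (⇑(Substructure.subtype N) ∘ ys) = fun i => ((ys i : ↥N) : M) := rfl
  rw [e0, e1, e2] at h2
  exact h2.1 (hall _)

lemma equiv_sigma2_of_psc [Finite L.Symbols] [∀ m, IsEmpty (L.Functions (m + 1))]
    {φ : L.Sentence} {k l : ℕ} (hk : PSC φ k) (hl : PSC φ.not l) :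
    ∃ β : L.BoundedFormula Empty (k + l), β.IsQF ∧ Equiv φ (sigma2 k l β) := by
  classical
  haveI : Fintype (AtomIdx L (k + l)) := Fintype.ofFinite _
  haveI : Fintype (Set (AtomIdx L (k + l))) := Fintype.ofFinite _
  set Good : Set (AtomIdx L (k + l)) → Prop := fun T =>
    ∃ (M' : Type max u v) (iM' : L.Structure M'),
      Nonempty M' ∧ (M' ⊨ φ) ∧ ∃ (c : Fin k → M') (e : Fin l → M'),
        IsCore φ M' (Set.range c) ∧ T = {a | atomEval (Fin.append c e) a} with hGoodDef
  refine ⟨fsSup (Finset.univ.filter Good) typeF, isQF_iSup _ _ typeF_isQF, ?_⟩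
  have hβ : ∀ (N : Type max u v) (iN : L.Structure N) (xs : Fin (k + l) → N) (w : Empty → N),
      (fsSup (Finset.univ.filter Good) typeF).Realize w xs ↔
        Good {a | atomEval xs a} := by
    intro N iN xs w
    rw [realize_fsSup]
    constructor
    · rintro ⟨T, hT, hreal⟩
      rw [realize_typeF] at hreal
      subst hreal
      exact (Finset.mem_filter.1 hT).2
    · intro hg
      exact ⟨_, Finset.mem_filter.2 ⟨Finset.mem_univ _, hg⟩, (realize_typeF _ w xs).2 rfl⟩
  intro M iM iNe
  constructor
  · intro hm
    obtain ⟨C, hC, hcore⟩ := hk M hm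
    obtain ⟨a, ha⟩ := exists_tuple_cover C hC
    rw [realize_sigma2]
    exact ⟨a, fun ys => (hβ M _ _ _).2 ⟨M, iM, ‹Nonempty M›, hm, a, ys, hcore.mono ha, rfl⟩⟩
  · intro hs
    by_contra hnφ
    have hmn : M ⊨ φ.not := (Sentence.realize_not _).2 hnφ
    obtain ⟨C, hCl, hcore⟩ := hl M hmn
    obtain ⟨d, hd⟩ := exists_tuple_cover C hCl
    obtain ⟨a, hall⟩ := (realize_sigma2 _).1 hs
    obtain ⟨M', iM', hne', hm', c, e, hcore', hT⟩ := (hβ M _ _ _).1 (hall d)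
    have hAt : ∀ x : AtomIdx L (k + l),
        atomEval (Fin.append a d) x ↔ atomEval (Fin.append c e) x := fun x => Set.ext_iff.1 hT x
    by_cases hne : Nonempty (Tms L (k + l))
    · obtain ⟨s0⟩ := hne
      have h1 : ↥(rangeSub (L := L) (Fin.append a d)) ⊨ φ.not := by
        refine hcore _ ?_ ⟨⟨_, mem_rangeSub _ s0⟩⟩
        refine subset_trans hd ?_
        rintro x ⟨i, rfl⟩
        exact ⟨Sum.inl (Fin.natAdd k i), by simp [tmVal, Fin.append_right]⟩
      have h2 : ↥(rangeSub (L := L) (Fin.append c e)) ⊨ φ := by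
        refine hcore' _ ?_ ⟨⟨_, mem_rangeSub _ s0⟩⟩
        rintro x ⟨i, rfl⟩
        exact ⟨Sum.inl (Fin.castAdd l i), by simp [tmVal, Fin.append_left]⟩
      have h3 := (realize_rangeSub_iff (Fin.append a d) (Fin.append c e) hAt φ).2 h2
      exact (Sentence.realize_not _).1 h1 h3
    · rw [not_nonempty_iff] at hne
      have hc0 : IsEmpty (L.Functions 0) := ⟨fun f => hne.elim (Sum.inr f)⟩
      have hk0 : k = 0 := by
        by_contra hk0
        exact hne.elim (Sum.inl (Fin.castAdd l ⟨0, Nat.pos_of_ne_zero hk0⟩))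
      have hl0 : l = 0 := by
        by_contra hl0
        exact hne.elim (Sum.inl (Fin.natAdd k ⟨0, Nat.pos_of_ne_zero hl0⟩))
      have hnull : ∀ (R : L.Relations 0) (z : Fin 0 → M) (z' : Fin 0 → M'),
          Structure.RelMap R z ↔ Structure.RelMap R z' := by
        intro R z z'
        have h0 := hAt (Sum.inr ⟨⟨0, R⟩, Fin.elim0⟩)
        rw [atomEval_inr, atomEval_inr] at h0
        have e1 : z = fun i => tmVal (Fin.append a d) ((Fin.elim0 : Fin 0 → Tms L (k + l)) i) :=
          funext fun i => i.elim0
        have e2 : z' = fun i => tmVal (Fin.append c e) ((Fin.elim0 : Fin 0 → Tms L (k + l)) i) :=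
          funext fun i => i.elim0
        rw [e1, e2]
        exact h0
      obtain ⟨m₀⟩ := ‹Nonempty M›
      obtain ⟨m₀'⟩ := hne'
      letI iW : L.Structure (ULift.{max u v} Bool) := WStr hc0 m₀ m₀'
      have hrelF : ∀ (m : ℕ) (R : L.Relations m),
          Structure.RelMap R (fun _ : Fin m => (⟨false⟩ : ULift.{max u v} Bool)) ↔
            Structure.RelMap R (fun _ : Fin m => m₀) := by
        intro m R
        show (if ∀ i : Fin m, (⟨false⟩ : ULift.{max u v} Bool) = ⟨true⟩
          then Structure.RelMap R (fun _ : Fin m => m₀')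
          else Structure.RelMap R (fun _ : Fin m => m₀)) ↔ _
        match m with
        | 0 =>
          rw [if_pos (fun i => i.elim0)]
          exact (hnull R (fun _ => m₀) (fun _ => m₀')).symm
        | m + 1 =>
          rw [if_neg (fun hall' =>
            Bool.false_ne_true (congrArg ULift.down (hall' 0)))]
      have hrelT : ∀ (m : ℕ) (R : L.Relations m),
          Structure.RelMap R (fun _ : Fin m => (⟨true⟩ : ULift.{max u v} Bool)) ↔
            Structure.RelMap R (fun _ : Fin m => m₀') := by
        intro m R
        show (if ∀ i : Fin m, (⟨true⟩ : ULift.{max u v} Bool) = ⟨true⟩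
          then Structure.RelMap R (fun _ : Fin m => m₀')
          else Structure.RelMap R (fun _ : Fin m => m₀)) ↔ _
        rw [if_pos (fun i => rfl)]
      by_cases hWφ : (ULift.{max u v} Bool) ⊨ φ
      · obtain ⟨CW, hCW, hcoreW⟩ := hk (ULift.{max u v} Bool) hWφ
        have h1 : ↥(singleSub (L := L) hc0 (⟨false⟩ : ULift.{max u v} Bool)) ⊨ φ := by
          refine hcoreW _ ?_ ⟨⟨⟨false⟩, rfl⟩⟩
          have hce : CW = ∅ := Finset.card_eq_zero.1 (Nat.le_zero.1 (hk0 ▸ hCW))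
          simp [hce]
        have h2 : ↥(singleSub (L := L) hc0 m₀) ⊨ φ :=
          (StrongHomClass.realize_sentence (singleEquiv hc0 _ m₀ hrelF) φ).1 h1
        have h3 : ↥(singleSub (L := L) hc0 m₀) ⊨ φ.not := by
          refine hcore _ ?_ ⟨⟨m₀, rfl⟩⟩
          have hce : C = ∅ := Finset.card_eq_zero.1 (Nat.le_zero.1 (hl0 ▸ hCl))
          simp [hce]
        exact (Sentence.realize_not _).1 h3 h2
      · have hWn : (ULift.{max u v} Bool) ⊨ φ.not := (Sentence.realize_not _).2 hWφ
        obtain ⟨CW, hCW, hcoreW⟩ := hl (ULift.{max u v} Bool) hWn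
        have h1 : ↥(singleSub (L := L) hc0 (⟨true⟩ : ULift.{max u v} Bool)) ⊨ φ.not := by
          refine hcoreW _ ?_ ⟨⟨⟨true⟩, rfl⟩⟩
          have hce : CW = ∅ := Finset.card_eq_zero.1 (Nat.le_zero.1 (hl0 ▸ hCW))
          simp [hce]
        have h2 : ↥(singleSub (L := L) hc0 m₀') ⊨ φ.not :=
          (StrongHomClass.realize_sentence (singleEquiv hc0 _ m₀' hrelT) φ.not).1 h1
        have h3 : ↥(singleSub (L := L) hc0 m₀') ⊨ φ := by
          refine hcore' _ ?_ ⟨⟨m₀', rfl⟩⟩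
          have hre : Set.range c = ∅ := by
            subst hk0
            exact Set.range_eq_empty c
          rw [hre]
          exact Set.empty_subset _
        exact (Sentence.realize_not _).1 h2 h3


/-- For an FO sentence `φ` over a (finite) relational vocabulary and `k, l ∈ ℕ`, the following
are equivalent: (1) `φ ∈ PSC(k)` and `¬φ ∈ PSC(l)`; (2) `φ` is logically equivalent both to a
sentence `∃x₁…x_k ∀y₁…y_l β₁` and to a sentence `∀y₁…y_l ∃x₁…x_k β₂`, with `β₁`, `β₂`
quantifier-free. -/
theorem statement10 [Finite L.Symbols] [∀ n, IsEmpty (L.Functions (n + 1))]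
    (φ : L.Sentence) (k l : ℕ) :
    (PSC φ k ∧ PSC φ.not l) ↔
      ((∃ β₁ : L.BoundedFormula Empty (k + l), β₁.IsQF ∧ Equiv φ (sigma2 k l β₁)) ∧
        (∃ β₂ : L.BoundedFormula Empty (l + k), β₂.IsQF ∧ Equiv φ (pi2 l k β₂))) := by
  constructor
  · rintro ⟨hk, hl⟩
    obtain ⟨β₁, hq1, he1⟩ := equiv_sigma2_of_psc hk hl
    obtain ⟨γ, hq2, he2⟩ := equiv_sigma2_of_psc hl (psc_not_not hk)
    exact ⟨⟨β₁, hq1, he1⟩, ⟨γ.not, hq2.not, equiv_pi2_of_equiv_not_sigma2 γ he2⟩⟩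
  · rintro ⟨⟨β₁, hq1, he1⟩, ⟨β₂, hq2, he2⟩⟩
    exact ⟨psc_of_equiv_sigma2 hq1 he1,
      psc_of_equiv_sigma2 hq2.not (equiv_not_sigma2_of_equiv_pi2 β₂ he2)⟩

end Stmt
end

section
/- Let L be a regular language over a finite alphabet Σ accepted by a DFA with n states, let B ∈ ℕ, and let w ∈ Σ* be a word of length greater than N = (B+1)·n. Let A = {i₁,…,i_m} with m ≤ B be a set of positions of w. Then there is a word w₁ that occurs in w as a (scattered) subword via a strictly increasing embedding of positions whose range contains A, such that |w₁| ≤ N and w₁ ∈ L if and only if w ∈ L. -/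
section
variable {α : Type} {σ : Type} [Fintype σ]

theorem keystep
    (M : DFA α σ) {n B : ℕ} (hn : Fintype.card σ = n)
    (w : List α) (hw : (B + 1) * n < w.length)
    (A : Finset (Fin w.length)) (hA : A.card ≤ B) :
    ∃ i j : ℕ, i < j ∧ j ≤ w.length ∧ M.eval (w.take i) = M.eval (w.take j) ∧
      ∀ a ∈ A, (a : ℕ) < i ∨ j ≤ (a : ℕ) := by
  set φ : Fin (w.length + 1) → σ × Fin (B + 1) := fun k =>
    (M.eval (w.take k), ⟨(A.filter fun a : Fin w.length => (a : ℕ) < (k : ℕ)).card,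
      lt_of_le_of_lt (le_trans (Finset.card_filter_le _ _) hA) (Nat.lt_succ_self B)⟩) with hφ
  have hcard : Fintype.card (σ × Fin (B + 1)) < Fintype.card (Fin (w.length + 1)) := by
    simp [hn]
    nlinarith
  obtain ⟨i, j, hne, heq⟩ := Fintype.exists_ne_map_eq_of_card_lt φ hcard
  wlog hij : (i : ℕ) < (j : ℕ) generalizing i j
  · have hne' : (i:ℕ) ≠ (j:ℕ) := fun h => hne (Fin.ext h)
    exact this j i hne.symm heq.symm (by omega)
  refine ⟨i, j, hij, by omega, congrArg Prod.fst heq, ?_⟩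
  have hc : (A.filter fun a : Fin w.length => (a : ℕ) < (i : ℕ)).card
      = (A.filter fun a : Fin w.length => (a : ℕ) < (j : ℕ)).card := by
    have := congrArg Prod.snd heq
    simpa [hφ, Fin.ext_iff] using this
  have hsub : (A.filter fun a : Fin w.length => (a : ℕ) < (i : ℕ)) ⊆ (A.filter fun a : Fin w.length => (a : ℕ) < (j : ℕ)) := by
    intro a ha
    simp only [Finset.mem_filter] at ha ⊢
    exact ⟨ha.1, lt_trans ha.2 hij⟩
  have hsets := Finset.eq_of_subset_of_card_le hsub (le_of_eq hc.symm)
  intro a ha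
  by_cases h : (a : ℕ) < (j : ℕ)
  · left
    have : a ∈ (A.filter fun a : Fin w.length => (a : ℕ) < (j : ℕ)) := Finset.mem_filter.2 ⟨ha, h⟩
    rw [← hsets] at this
    exact (Finset.mem_filter.1 this).2
  · right; omega


theorem auxmain (M : DFA α σ) {n B : ℕ} (hn : Fintype.card σ = n) :
    ∀ (L : ℕ) (w : List α), w.length ≤ L → ∀ (A : Finset (Fin w.length)), A.card ≤ B →
    ∃ (w₁ : List α) (f : Fin w₁.length → Fin w.length),
      StrictMono f ∧
      (∀ i : Fin w₁.length, w₁.get i = w.get (f i)) ∧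
      (↑A : Set (Fin w.length)) ⊆ Set.range f ∧
      w₁.length ≤ (B + 1) * n ∧
      (w₁ ∈ M.accepts ↔ w ∈ M.accepts) := by
  intro L
  induction L with
  | zero =>
    intro w hL A hA
    refine ⟨w, id, strictMono_id, fun i => rfl, fun a _ => ⟨a, rfl⟩, by omega, Iff.rfl⟩
  | succ L ih =>
    intro w hL A hA
    by_cases hlen : w.length ≤ (B + 1) * n
    · exact ⟨w, id, strictMono_id, fun i => rfl, fun a _ => ⟨a, rfl⟩, hlen, Iff.rfl⟩
    push_neg at hlen
    obtain ⟨i, j, hij, hjlen, hstate, havoid⟩ := keystep M hn w hlen A hA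
    set w' : List α := w.take i ++ w.drop j with hw'
    have hilen : i < w.length := lt_of_lt_of_le hij hjlen
    have hlen' : w'.length = i + (w.length - j) := by
      simp [hw', Nat.min_eq_left (le_of_lt hilen)]
    -- the embedding of w' back into w
    have gval : ∀ k : Fin w'.length, (if (k : ℕ) < i then (k : ℕ) else (k : ℕ) + (j - i)) < w.length := by
      intro k
      have := k.isLt
      split <;> omega
    set g : Fin w'.length → Fin w.length := fun k => ⟨_, gval k⟩ with hg
    have gmono : StrictMono g := by
      intro k l hkl
      have hk := k.isLt; have hl := l.isLt
      simp only [hg, Fin.mk_lt_mk, Fin.lt_def] at hkl ⊢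
      split <;> split <;> omega
    have gget : ∀ k : Fin w'.length, w'.get k = w.get (g k) := by
      intro k
      have hk := k.isLt
      simp only [hg, List.get_eq_getElem, hw']
      by_cases h : (k : ℕ) < i
      · rw [List.getElem_append_left (by simpa [Nat.min_eq_left (le_of_lt hilen)] using h)]
        simp [List.getElem_take, h]
      · rw [List.getElem_append_right (by simp [Nat.min_eq_left (le_of_lt hilen)]; omega)]
        simp only [List.getElem_drop, List.length_take, Nat.min_eq_left (le_of_lt hilen)]
        congr 1
        split <;> omega
    -- the set A pulled back
    set A' : Finset (Fin w'.length) := Finset.univ.filter (fun k => g k ∈ A) with hA'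
    have himg : A'.image g = A := by
      apply Finset.Subset.antisymm
      · intro a ha
        obtain ⟨k, hk, rfl⟩ := Finset.mem_image.1 ha
        exact (Finset.mem_filter.1 hk).2
      · intro a ha
        have hcase := havoid a ha
        have hklt : (if (a : ℕ) < i then (a : ℕ) else (a : ℕ) - (j - i)) < w'.length := by
          rw [hlen']
          have := a.isLt
          split <;> omega
        have hgk : g ⟨_, hklt⟩ = a := by
          simp only [hg, Fin.ext_iff]
          split <;> (try split) <;> omega
        refine Finset.mem_image.2 ⟨⟨_, hklt⟩, ?_, hgk⟩
        rw [Finset.mem_filter]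
        exact ⟨Finset.mem_univ _, by rw [hgk]; exact ha⟩
    have hA'card : A'.card ≤ B := by
      have : A'.card = A.card := by
        rw [← himg, Finset.card_image_of_injective _ gmono.injective]
      omega
    have hlt : w'.length ≤ L := by
      rw [hlen']; omega
    obtain ⟨w₁, f', hmono, hget, hsub, hlen₁, hacc⟩ := ih w' hlt A' hA'card
    have heval : M.eval w' = M.eval w := by
      calc M.eval w' = M.evalFrom (M.eval (w.take i)) (w.drop j) := by
            rw [hw']; exact M.evalFrom_of_append _ _ _
        _ = M.evalFrom (M.eval (w.take j)) (w.drop j) := by rw [hstate]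
        _ = M.eval (w.take j ++ w.drop j) := (M.evalFrom_of_append _ _ _).symm
        _ = M.eval w := by rw [List.take_append_drop]
    refine ⟨w₁, g ∘ f', gmono.comp hmono, ?_, ?_, hlen₁, ?_⟩
    · intro p
      rw [hget p, gget]; rfl
    · intro a ha
      have : a ∈ A'.image g := by rw [himg]; exact ha
      obtain ⟨k, hk, rfl⟩ := Finset.mem_image.1 this
      obtain ⟨p, rfl⟩ := hsub hk
      exact ⟨p, rfl⟩
    · rw [hacc]
      rw [DFA.mem_accepts, DFA.mem_accepts, heval]

end

/-- Let `L` be a regular language over a finite alphabet accepted by a DFA with `n` states,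
`B ∈ ℕ`, and `w` a word of length greater than `N = (B+1)·n`. Let `A` be a set of at most `B`
positions of `w`. Then there is a word `w₁` occurring in `w` as a scattered subword via a
strictly increasing embedding of positions whose range contains `A`, such that `|w₁| ≤ N` and
`w₁` is accepted iff `w` is accepted. -/
theorem statement11 {α : Type} [Fintype α] {σ : Type} [Fintype σ]
    (M : DFA α σ) (n B : ℕ) (hn : Fintype.card σ = n)
    (w : List α) (hw : (B + 1) * n < w.length)
    (A : Finset (Fin w.length)) (hA : A.card ≤ B) :
    ∃ (w₁ : List α) (f : Fin w₁.length → Fin w.length),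
      StrictMono f ∧
      (∀ i : Fin w₁.length, w₁.get i = w.get (f i)) ∧
      (↑A : Set (Fin w.length)) ⊆ Set.range f ∧
      w₁.length ≤ (B + 1) * n ∧
      (w₁ ∈ M.accepts ↔ w ∈ M.accepts) := by
  exact auxmain M hn w.length w le_rfl A hA
end

section
/- Let Σ be a finite alphabet and let S ⊆ Σ* be a set of words closed under taking (scattered) subwords. Then there exists a finite set T ⊆ Σ* of words such that for every word w ∈ Σ*, w ∈ S if and only if no member of T is a (scattered) subword of w. -/
/-- Let `Σ` be a finite alphabet and `S ⊆ Σ*` a set of words closed under taking (scattered)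
subwords. Then there is a finite set `T` of words such that for every word `w`, `w ∈ S` iff
no member of `T` is a (scattered) subword of `w`. -/
theorem statement12 {α : Type} [Finite α] (S : Set (List α))
    (hS : ∀ w ∈ S, ∀ u : List α, List.Sublist u w → u ∈ S) :
    ∃ T : Finset (List α), ∀ w : List α, w ∈ S ↔ ∀ t ∈ T, ¬ List.Sublist t w := by
  classical
  -- Higman's lemma: Sublist is a PWO on all lists
  have hpwo : (Set.univ : Set (List α)).PartiallyWellOrderedOn
      (List.SublistForall₂ (· = · : α → α → Prop)) := by
    have h : (Set.univ : Set α).PartiallyWellOrderedOn (· = ·) :=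
      Set.Finite.partiallyWellOrderedOn Set.finite_univ
    have := Set.PartiallyWellOrderedOn.partiallyWellOrderedOn_sublistForall₂ (· = ·) h
    exact this.mono (by intro l _ x hx; trivial)
  have hpwo' : (Set.univ : Set (List α)).PartiallyWellOrderedOn List.Sublist := by
    intro f
    obtain ⟨m, n, hmn, h⟩ := hpwo f
    change List.SublistForall₂ (· = ·) (f m).1 (f n).1 at h
    rw [List.sublistForall₂_iff] at h
    obtain ⟨l, h1, h2⟩ := h
    rw [List.forall₂_eq_eq_eq] at h1
    exact ⟨m, n, hmn, show List.Sublist (f m).1 (f n).1 from h1 ▸ h2⟩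
  -- minimal elements of Sᶜ
  set M : Set (List α) := {t | t ∉ S ∧ ∀ u : List α, u.Sublist t → u ≠ t → u ∈ S} with hM
  have hanti : IsAntichain List.Sublist M := by
    rintro a ⟨haS, _⟩ b ⟨_, hbmin⟩ hab hsub
    exact haS (hbmin a hsub hab)
  have hfin : M.Finite :=
    hanti.finite_of_partiallyWellOrderedOn (hpwo'.mono (Set.subset_univ M))
  -- every word not in S has a sublist in M
  have hmin : ∀ n (w : List α), w.length ≤ n → w ∉ S → ∃ t ∈ M, t.Sublist w := by
    intro n
    induction n with
    | zero =>
      intro w hl hw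
      rw [Nat.le_zero, List.length_eq_zero_iff] at hl
      subst hl
      refine ⟨[], ⟨hw, fun u hu _ => absurd (List.eq_nil_of_sublist_nil hu) ?_⟩, List.Sublist.refl _⟩
      · intro h; exact ‹u ≠ []› h
    | succ n ih =>
      intro w hl hw
      by_cases hwM : ∀ u : List α, u.Sublist w → u ≠ w → u ∈ S
      · exact ⟨w, ⟨hw, hwM⟩, List.Sublist.refl _⟩
      · push_neg at hwM
        obtain ⟨u, husub, hune, huS⟩ := hwM
        have hlt : u.length < w.length :=
          lt_of_le_of_ne husub.length_le (fun h => hune (husub.eq_of_length h))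
        obtain ⟨t, htM, hts⟩ := ih u (by omega) huS
        exact ⟨t, htM, hts.trans husub⟩
  refine ⟨hfin.toFinset, fun w => ⟨fun hw t ht hsub => ?_, fun h => ?_⟩⟩
  · rw [Set.Finite.mem_toFinset] at ht
    exact ht.1 (hS w hw t hsub)
  · by_contra hw
    obtain ⟨t, htM, hsub⟩ := hmin w.length w le_rfl hw
    exact h t (hfin.mem_toFinset.mpr htM) hsub
end

section
/- Let 𝒞 be the class of directed graphs (structures with one binary relation E) in which every vertex has in-degree at most 1 and out-degree at most 1 and there is no directed cycle of any length (i.e., disjoint unions of oriented paths). For each B ≥ 1, the FO sentence φ asserting that there are at least B vertices of total degree (in-degree plus out-degree) at most 1 belongs to PSC(B), but for no n ∈ ℕ is φ equivalent over 𝒞 to the condition: there exist elements a₁,…,a_B such that for all elements b₁,…,b_n, the substructure induced on {a₁,…,a_B,b₁,…,b_n} satisfies φ. -/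
open FirstOrder Language

universe u v

namespace Stmt

variable {L : FirstOrder.Language.{u, v}}

/-- The edge relation of a structure for the language with a single binary relation. -/
abbrev E (M : Type) [Language.graph.Structure M] (x y : M) : Prop :=
  Structure.RelMap Language.adj ![x, y]

/-- Membership in the class 𝒞 of directed graphs in which every vertex has in-degree at most 1
and out-degree at most 1 and there is no directed cycle of any length (i.e. disjoint unions of
oriented paths). -/
def InDirPaths (M : Type) [Language.graph.Structure M] : Prop :=
  (∀ x y z : M, E M x z → E M y z → x = y) ∧
  (∀ x y z : M, E M x y → E M x z → y = z) ∧
  ∀ (m : ℕ) (f : Fin (m + 1) → M), ¬ ∀ i, E M (f i) (f (i + 1))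

/-- `v` has total degree (in-degree plus out-degree) at most 1. -/
def TotalDegLE1 (M : Type) [Language.graph.Structure M] (v : M) : Prop :=
  (∀ u₁ u₂ : M, (E M u₁ v ∨ E M v u₁) → (E M u₂ v ∨ E M v u₂) → u₁ = u₂) ∧
  ∀ u : M, ¬ (E M u v ∧ E M v u)


/-! ### Auxiliary material for the proof -/

/-- variable term -/
def vr {k : ℕ} (i : Fin k) : Language.graph.Term (Empty ⊕ Fin k) := Term.var (Sum.inr i)

/-- edge formula -/
def edg {k : ℕ} (i j : Fin k) : Language.graph.BoundedFormula Empty k :=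
  adj.boundedFormula₂ (vr i) (vr j)

def nbr {k : ℕ} (i j : Fin k) : Language.graph.BoundedFormula Empty k :=
  edg i j ⊔ edg j i

def deg1F (B : ℕ) (i : Fin B) : Language.graph.BoundedFormula Empty B :=
  (((nbr ((Fin.last B).castSucc) (i.castSucc.castSucc) ⊓
      nbr (Fin.last (B+1)) (i.castSucc.castSucc)) ⟹
     Term.bdEqual (vr ((Fin.last B).castSucc)) (vr (Fin.last (B+1)))).all.all) ⊓
  ((∼(edg (Fin.last B) (i.castSucc) ⊓ edg (i.castSucc) (Fin.last B))).all)

noncomputable def phi (B : ℕ) : Language.graph.Sentence :=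
  (BoundedFormula.iInf
      (fun p : {p : Fin B × Fin B // p.1 ≠ p.2} => ∼(Term.bdEqual (vr p.1.1) (vr p.1.2))) ⊓
   BoundedFormula.iInf (deg1F B)).exs

lemma realize_phi {B : ℕ} (M : Type) [Language.graph.Structure M] :
    M ⊨ phi B ↔ ∃ f : Fin B → M, Function.Injective f ∧ ∀ i, TotalDegLE1 M (f i) := by
  rw [phi, Sentence.Realize, BoundedFormula.realize_exs]
  apply exists_congr; intro xs
  simp only [deg1F, nbr, edg, vr, BoundedFormula.realize_inf, BoundedFormula.realize_iInf,
    BoundedFormula.realize_not, BoundedFormula.realize_all, BoundedFormula.realize_imp,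
    BoundedFormula.realize_sup, BoundedFormula.realize_rel₂, BoundedFormula.realize_bdEqual,
    Term.realize_var, Function.comp_apply, Sum.elim_inr, Fin.snoc_castSucc, Fin.snoc_last,
    Finset.mem_filter, Finset.mem_univ, true_and]
  constructor
  · rintro ⟨hd, hdeg⟩
    refine ⟨fun i j hij => by_contra fun hne => hd ⟨(i, j), hne⟩ hij, fun i => ?_⟩
    obtain ⟨h1, h2⟩ := hdeg i
    exact ⟨fun u₁ u₂ a b => h1 u₁ u₂ ⟨a, b⟩, fun u hc => h2 u hc⟩
  · rintro ⟨hinj, hdeg⟩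
    refine ⟨fun p heq => p.2 (hinj heq), fun i => ?_⟩
    obtain ⟨h1, h2⟩ := hdeg i
    exact ⟨fun u₁ u₂ ⟨a, b⟩ => h1 u₁ u₂ a b, fun u hc => h2 u hc⟩

lemma E_sub {M : Type} [Language.graph.Structure M] (N : Language.graph.Substructure M)
    (x y : ↥N) : E (↥N) x y ↔ E M ↑x ↑y := by
  have h : (fun i => ((![x, y] i : ↥N) : M)) = ![(x : M), (y : M)] := by
    funext i; fin_cases i <;> rfl
  show Structure.RelMap adj (fun i => ((![x, y] i : ↥N) : M)) ↔ _
  rw [h]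

def intStruct : Language.graph.Structure ℤ where
  funMap := fun f _ => Empty.elim f
  RelMap := fun r => match r with | .adj => fun x => x 1 = x 0 + 1

lemma E_int (x y : ℤ) : @E ℤ intStruct x y ↔ y = x + 1 := Iff.rfl

lemma int_paths : @InDirPaths ℤ intStruct := by
  refine ⟨fun x y z hx hy => by rw [E_int] at hx hy; omega,
    fun x y z hx hy => by rw [E_int] at hx hy; omega, fun m f hf => ?_⟩
  have h1 : ∀ i : Fin (m + 1), f (i + 1) = f i + 1 := fun i => (E_int _ _).1 (hf i)
  have hperm : ∑ i : Fin (m + 1), f (i + 1) = ∑ i : Fin (m + 1), f i :=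
    Fintype.sum_equiv (Equiv.addRight 1) _ _ (fun i => rfl)
  have hsum : ∑ i : Fin (m + 1), f (i + 1) = (∑ i : Fin (m + 1), f i) + (m + 1) := by
    rw [Finset.sum_congr rfl (fun i _ => h1 i), Finset.sum_add_distrib]
    simp [mul_comm]
  rw [hperm] at hsum
  omega

lemma int_not_phi {B : ℕ} (hB : 1 ≤ B) : ¬ (@Sentence.Realize _ ℤ intStruct (phi B)) := by
  rw [@realize_phi B ℤ intStruct]
  rintro ⟨f, -, hdeg⟩
  set v := f ⟨0, hB⟩ with hv
  have := (hdeg ⟨0, hB⟩).1 (v - 1) (v + 1)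
    (Or.inl ((E_int _ _).2 (by ring))) (Or.inr ((E_int _ _).2 rfl))
  omega

section

attribute [local instance] intStruct

lemma rhs_holds (B n : ℕ) (hB : 1 ≤ B) (b : Fin n → ℤ) :
    ↥(Substructure.closure Language.graph
        (Set.range (fun i : Fin B => ((B : ℤ) + n + 2) * (i : ℤ)) ∪ Set.range b)) ⊨ phi B := by
  classical
  set a : Fin B → ℤ := fun i => ((B : ℤ) + n + 2) * (i : ℤ) with ha
  set S : Set ℤ := Set.range a ∪ Set.range b with hS
  set N := Substructure.closure Language.graph S with hN
  have hmemN : ∀ x : ℤ, x ∈ N ↔ x ∈ S := fun x =>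
    Substructure.mem_closure_iff_of_isRelational Language.graph S x
  set Sfin : Finset ℤ := Finset.univ.image a ∪ Finset.univ.image b with hSfin'
  have hSfin : ∀ x, x ∈ S ↔ x ∈ Sfin := by
    intro x
    simp [hS, hSfin', Set.mem_union, Finset.mem_union, Set.mem_range, Finset.mem_image, eq_comm]
  have hcard : Sfin.card ≤ B + n := by
    refine (Finset.card_union_le _ _).trans (add_le_add ?_ ?_) <;>
      exact Finset.card_image_le.trans (by simp)
  set P : Fin B → ℕ → Prop := fun i t => ∀ s : ℕ, s ≤ t → a i + s ∈ S with hP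
  have hP0 : ∀ i, P i 0 := by
    intro i s hs
    have : s = 0 := Nat.le_zero.mp hs
    subst this
    simpa [hS] using Or.inl ⟨i, rfl⟩
  have hPbound : ∀ i t, P i t → t + 1 ≤ B + n := by
    intro i t hPt
    have hc : (Finset.range (t + 1)).card ≤ Sfin.card := by
      apply Finset.card_le_card_of_injOn (fun s : ℕ => a i + (s : ℤ))
      · intro s hs
        rw [Finset.mem_coe, ← hSfin]
        exact hPt s (Nat.lt_succ_iff.mp (Finset.mem_range.mp (Finset.mem_coe.mp hs)))
      · intro s1 _ s2 _ h
        dsimp only at h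
        omega
    simpa using hc.trans hcard
  set t : Fin B → ℕ := fun i => Nat.findGreatest (P i) (B + n) with ht
  have htP : ∀ i, P i (t i) := fun i => Nat.findGreatest_spec (Nat.zero_le _) (hP0 i)
  have htle : ∀ i, t i ≤ B + n := fun i => Nat.findGreatest_le _
  have hm : ∀ i, a i + (t i : ℤ) ∈ S := fun i => htP i (t i) le_rfl
  have hnext : ∀ i, a i + (t i : ℤ) + 1 ∉ S := by
    intro i hmem
    have hP1 : P i (t i + 1) := by
      intro s hs
      by_cases h : s ≤ t i
      · exact htP i s h
      · have hse : s = t i + 1 := by omega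
        subst hse
        have : a i + ((t i + 1 : ℕ) : ℤ) = a i + (t i : ℤ) + 1 := by push_cast; ring
        rw [this]; exact hmem
    have hb2 := hPbound i _ hP1
    have h7 : t i + 1 ≤ t i := Nat.le_findGreatest (by omega) hP1
    omega
  have hminj : ∀ i j : Fin B, a i + (t i : ℤ) = a j + (t j : ℤ) → i = j := by
    have key : ∀ i j : Fin B, i < j → a i + (t i : ℤ) = a j + (t j : ℤ) → False := by
      intro i j hij h
      have hij' : ((i : ℕ) : ℤ) < ((j : ℕ) : ℤ) := by exact_mod_cast hij
      have h3 : ((B : ℤ) + n + 2) * 1 ≤ ((B : ℤ) + n + 2) * ((j : ℕ) - (i : ℕ) : ℤ) := by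
        apply mul_le_mul_of_nonneg_left (by omega) (by positivity)
      have h5 : (t i : ℤ) ≤ (B : ℤ) + n := by exact_mod_cast htle i
      have h6 : (0 : ℤ) ≤ (t j : ℤ) := Int.natCast_nonneg _
      simp only [ha] at h
      nlinarith
    intro i j h
    by_contra hne
    exact (lt_or_gt_of_ne hne).elim (fun hlt => key i j hlt h) (fun hgt => key j i hgt h.symm)
  rw [realize_phi]
  refine ⟨fun i => ⟨a i + (t i : ℤ), (hmemN _).2 (hm i)⟩, ?_, ?_⟩
  · intro i j hij
    exact hminj i j (congrArg Subtype.val hij)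
  · intro i
    have hu : ∀ u : ↥N, (E (↥N) u ⟨a i + (t i : ℤ), (hmemN _).2 (hm i)⟩ ∨
        E (↥N) ⟨a i + (t i : ℤ), (hmemN _).2 (hm i)⟩ u) → (u : ℤ) = a i + (t i : ℤ) - 1 := by
      intro u hu
      have humem : (u : ℤ) ∈ S := (hmemN _).1 u.2
      rcases hu with h | h
      · rw [E_sub, E_int] at h
        simp only at h
        omega
      · rw [E_sub, E_int] at h
        simp only at h
        rw [h] at humem
        exact absurd humem (hnext i)
    constructor
    · intro u₁ u₂ h1 h2
      exact Subtype.ext (by rw [hu u₁ h1, hu u₂ h2])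
    · rintro u ⟨h1, h2⟩
      rw [E_sub, E_int] at h1 h2
      simp only at h1 h2
      omega

end


/-- For each `B ≥ 1`, the FO sentence `φ` asserting that there are at least `B` vertices of
total degree at most 1 belongs to `PSC(B)`, but for no `n ∈ ℕ` is `φ` equivalent over the
class 𝒞 of disjoint unions of oriented paths to the condition: there exist `a₁,…,a_B` such
that for all `b₁,…,b_n`, the substructure induced on `{a₁,…,a_B,b₁,…,b_n}` satisfies `φ`. -/
theorem statement13 (B : ℕ) (hB : 1 ≤ B) :
    ∃ φ : Language.graph.Sentence,
      (∀ (M : Type) [Language.graph.Structure M] [Nonempty M],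
          M ⊨ φ ↔ ∃ f : Fin B → M, Function.Injective f ∧ ∀ i, TotalDegLE1 M (f i)) ∧
      PSC φ B ∧
      ∀ n : ℕ,
        ¬ ∀ (M : Type) [Language.graph.Structure M] [Nonempty M], InDirPaths M →
            (M ⊨ φ ↔
              ∃ a : Fin B → M, ∀ b : Fin n → M,
                ↥(Substructure.closure Language.graph (Set.range a ∪ Set.range b)) ⊨ φ) := by
  classical
  refine ⟨phi B, fun M _ _ => realize_phi M, ?_, ?_⟩
  · intro M _ _ hM
    obtain ⟨f, hinj, hdeg⟩ := (realize_phi M).1 hM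
    refine ⟨Finset.univ.image f, Finset.card_image_le.trans (by simp), ?_⟩
    intro N hsub _
    rw [realize_phi]
    refine ⟨fun i => ⟨f i, hsub (by simp)⟩,
      fun i j hij => hinj (congrArg Subtype.val hij), ?_⟩
    intro i
    constructor
    · intro u₁ u₂ h1 h2
      exact Subtype.ext ((hdeg i).1 ↑u₁ ↑u₂
        (h1.imp (fun h => (E_sub N _ _).1 h) (fun h => (E_sub N _ _).1 h))
        (h2.imp (fun h => (E_sub N _ _).1 h) (fun h => (E_sub N _ _).1 h)))
    · rintro u ⟨h1, h2⟩
      rw [E_sub] at h1 h2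
      exact (hdeg i).2 ↑u ⟨h1, h2⟩
  · intro n h
    have h2 := @h ℤ intStruct ⟨0⟩ int_paths
    exact int_not_phi hB
      (h2.2 ⟨fun i => ((B : ℤ) + n + 2) * (i : ℤ), fun b => rhs_holds B n hB b⟩)


end Stmt
end
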